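/- arXiv:1202.4194 — 4 statements merged into one kernel-verified Lean document; each statement's English description precedes it below -/
import Mathlib

section
/- Let p ≥ 3 be a prime and n ≥ 1. Every nontrivial complex representation of the group SL₂(ℤ/p^nℤ) has degree at least (p−1)/2; that is, if ρ : SL₂(ℤ/p^nℤ) → GL_d(ℂ) is a group homomorphism which is not identically the identity matrix, then d ≥ (p−1)/2. -/
open Matrix

namespace SL2AuxProof

variable {R : Type*} [CommRing R]

/-- upper elementary matrix in SL2 -/
def Rm (x : R) : Matrix.SpecialLinearGroup (Fin 2) R :=
  ⟨!![1, x; 0, 1], by simp [Matrix.det_fin_two_of]⟩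

/-- lower elementary matrix in SL2 -/
def Lm (x : R) : Matrix.SpecialLinearGroup (Fin 2) R :=
  ⟨!![1, 0; x, 1], by simp [Matrix.det_fin_two_of]⟩

/-- the Weyl element -/
def Wm : Matrix.SpecialLinearGroup (Fin 2) R :=
  ⟨!![0, -1; 1, 0], by simp [Matrix.det_fin_two_of]⟩

/-- diagonal torus element -/
def Dm (t : Rˣ) : Matrix.SpecialLinearGroup (Fin 2) R :=
  ⟨!![(t : R), 0; 0, ((t⁻¹ : Rˣ) : R)], by simp [Matrix.det_fin_two_of]⟩

lemma Rm_mul (x y : R) : Rm x * Rm y = Rm (x + y) := by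
  apply Subtype.ext
  rw [Matrix.SpecialLinearGroup.coe_mul]
  simp [Rm, Matrix.SpecialLinearGroup.coe_mul, Matrix.mul_fin_two]
  ring_nf

lemma Rm_zero : (Rm (0 : R)) = 1 := by
  apply Subtype.ext
  show _ = (1 : Matrix (Fin 2) (Fin 2) R)
  rw [Matrix.one_fin_two]
  simp [Rm]

lemma Rm_pow (x : R) (k : ℕ) : Rm x ^ k = Rm ((k : R) * x) := by
  induction k with
  | zero => simp [Rm_zero]
  | succ m ih =>
    rw [pow_succ, ih, Rm_mul]
    push_cast
    ring_nf

lemma Wm_conj (x : R) : Wm * Rm x * Wm⁻¹ = Lm (-x) := by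
  rw [mul_inv_eq_iff_eq_mul]
  apply Subtype.ext
  rw [Matrix.SpecialLinearGroup.coe_mul, Matrix.SpecialLinearGroup.coe_mul]
  simp [Wm, Rm, Lm, Matrix.SpecialLinearGroup.coe_mul, Matrix.mul_fin_two]

lemma Dm_conj (t : Rˣ) (x : R) : Dm t * Rm x * (Dm t)⁻¹ = Rm ((t : R) * (t : R) * x) := by
  rw [mul_inv_eq_iff_eq_mul]
  apply Subtype.ext
  have h : (t : R) * (t : R) * x * ((t⁻¹ : Rˣ) : R) = (t : R) * x := by
    calc (t : R) * (t : R) * x * ((t⁻¹ : Rˣ) : R)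
        = ((t : R) * ((t⁻¹ : Rˣ) : R)) * ((t : R) * x) := by ring
      _ = (t : R) * x := by rw [Units.mul_inv, one_mul]
  rw [Matrix.SpecialLinearGroup.coe_mul, Matrix.SpecialLinearGroup.coe_mul]
  simp [Dm, Rm, Matrix.SpecialLinearGroup.coe_mul, Matrix.mul_fin_two, h]

end SL2AuxProof

namespace Part2
open SL2AuxProof
variable {R : Type*} [CommRing R]

lemma factor_unit (M : Matrix.SpecialLinearGroup (Fin 2) R) (u : Rˣ)
    (hu : (M : Matrix (Fin 2) (Fin 2) R) 1 0 = (u : R)) :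
    M = Rm (((M : Matrix (Fin 2) (Fin 2) R) 0 0 - 1) * ((u⁻¹ : Rˣ) : R)) * Lm (u : R) *
      Rm ((M : Matrix (Fin 2) (Fin 2) R) 0 1 +
        (1 - (M : Matrix (Fin 2) (Fin 2) R) 0 0) * ((u⁻¹ : Rˣ) : R) *
        (M : Matrix (Fin 2) (Fin 2) R) 1 1) := by
  have hdet : (M : Matrix (Fin 2) (Fin 2) R).det = 1 := M.2
  rw [Matrix.det_fin_two] at hdet
  have hec : ((u⁻¹ : Rˣ) : R) * (u : R) = 1 := Units.inv_mul u
  apply Subtype.ext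
  rw [Matrix.SpecialLinearGroup.coe_mul, Matrix.SpecialLinearGroup.coe_mul]
  simp only [Matrix.SpecialLinearGroup.coe_mul, Rm, Lm]
  rw [hu] at hdet
  ext i j
  fin_cases i <;> fin_cases j <;>
    simp [Matrix.mul_fin_two]
  · linear_combination ((M : Matrix (Fin 2) (Fin 2) R) 0 0 - 1) * (M : Matrix (Fin 2) (Fin 2) R) 0 1 * hec +
      ((M : Matrix (Fin 2) (Fin 2) R) 0 0 - 1) * ((u⁻¹ : Rˣ) : R) * hdet
  · exact hu
  · linear_combination hdet + ((M : Matrix (Fin 2) (Fin 2) R) 0 0 - 1) *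
      (M : Matrix (Fin 2) (Fin 2) R) 1 1 * hec


variable {G : Type*} [Group G]

lemma hom_L_eq_one (φ : Matrix.SpecialLinearGroup (Fin 2) R →* G)
    (hR : ∀ x : R, φ (Rm x) = 1) (x : R) : φ (Lm x) = 1 := by
  have h := Wm_conj (R := R) (-x)
  rw [neg_neg] at h
  rw [← h, _root_.map_mul, _root_.map_mul, _root_.map_inv, hR, mul_one, mul_inv_cancel]

lemma hom_eq_one (hor : ∀ a b c d : R, a * d - b * c = 1 → IsUnit a ∨ IsUnit c)
    (φ : Matrix.SpecialLinearGroup (Fin 2) R →* G)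
    (hR : ∀ x : R, φ (Rm x) = 1) (M : Matrix.SpecialLinearGroup (Fin 2) R) :
    φ M = 1 := by
  have hL := hom_L_eq_one φ hR
  have key : ∀ (N : Matrix.SpecialLinearGroup (Fin 2) R) (u : Rˣ),
      (N : Matrix (Fin 2) (Fin 2) R) 1 0 = (u : R) → φ N = 1 := by
    intro N u hu
    rw [factor_unit N u hu, _root_.map_mul, _root_.map_mul, hR, hL, hR, mul_one, mul_one]
  have hdet : (M : Matrix (Fin 2) (Fin 2) R).det = 1 := M.2
  rw [Matrix.det_fin_two] at hdet
  rcases hor _ _ _ _ hdet with ha | hc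
  · set s := (1 - (M : Matrix (Fin 2) (Fin 2) R) 1 0) * ((ha.unit⁻¹ : Rˣ) : R) with hs
    have h1 : ((ha.unit⁻¹ : Rˣ) : R) * (M : Matrix (Fin 2) (Fin 2) R) 0 0 = 1 := by
      have := Units.inv_mul ha.unit
      rwa [IsUnit.unit_spec] at this
    have hent : ((Lm s * M : Matrix.SpecialLinearGroup (Fin 2) R) :
        Matrix (Fin 2) (Fin 2) R) 1 0 = ((1 : Rˣ) : R) := by
      rw [Matrix.SpecialLinearGroup.coe_mul]
      simp [Lm, Matrix.mul_apply, Fin.sum_univ_two]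
      linear_combination (1 - (M : Matrix (Fin 2) (Fin 2) R) 1 0) * h1
    have h2 := key (Lm s * M) 1 hent
    calc φ M = φ (Lm s) * φ M := by rw [hL, one_mul]
      _ = φ (Lm s * M) := (_root_.map_mul φ _ _).symm
      _ = 1 := h2
  · exact key M hc.unit hc.unit_spec.symm

lemma zmod_hor (p n : ℕ) (hp : p.Prime) (hn : 1 ≤ n) :
    ∀ a b c d : ZMod (p ^ n), a * d - b * c = 1 → IsUnit a ∨ IsUnit c := by
  haveI : Fact p.Prime := ⟨hp⟩
  haveI : NeZero (p ^ n) := ⟨pow_ne_zero n hp.pos.ne'⟩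
  have hdvd : p ∣ p ^ n := dvd_pow_self p (by omega)
  set φ := ZMod.castHom hdvd (ZMod p) with hφdef
  have unit_of : ∀ x : ZMod (p ^ n), φ x ≠ 0 → IsUnit x := by
    intro x hx
    have hval : ((x.val : ℕ) : ZMod (p ^ n)) = x := ZMod.natCast_rightInverse x
    have hφx : φ x = ((x.val : ℕ) : ZMod p) := by
      conv_lhs => rw [← hval]
      rw [map_natCast]
    rw [hφx] at hx
    have hnd : ¬ p ∣ x.val := fun h => hx ((ZMod.natCast_eq_zero_iff _ _).mpr h)
    have hcop : x.val.Coprime p := ((Nat.Prime.coprime_iff_not_dvd hp).mpr hnd).symm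
    have : IsUnit ((x.val : ℕ) : ZMod (p ^ n)) :=
      (ZMod.isUnit_iff_coprime _ _).mpr (Nat.Coprime.pow_right n hcop)
    rwa [hval] at this
  intro a b c d h
  by_contra hcon
  push_neg at hcon
  have hφa : φ a = 0 := by
    by_contra h'; exact hcon.1 (unit_of a h')
  have hφc : φ c = 0 := by
    by_contra h'; exact hcon.2 (unit_of c h')
  have h1 : (1 : ZMod p) = 0 := by
    have := congrArg φ h
    rw [map_sub, _root_.map_mul, _root_.map_mul, _root_.map_one, hφa, hφc] at this
    simpa using this.symm
  exact one_ne_zero h1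

open Polynomial in
lemma exists_eigenvalue_ne_one {d N : ℕ} (hN : (N : ℂ) ≠ 0)
    (f : Module.End ℂ (Fin d → ℂ)) (hf1 : f ≠ 1) (hfN : f ^ N = 1) :
    ∃ ζ : ℂ, ζ ≠ 1 ∧ ζ ^ N = 1 ∧ f.HasEigenvalue ζ := by
  have hint : IsIntegral ℂ f := Algebra.IsIntegral.isIntegral (R := ℂ) f
  set q := minpoly ℂ f with hq
  have haev : (Polynomial.aeval f) ((X : ℂ[X]) ^ N - 1) = 0 := by
    rw [map_sub, map_pow, aeval_X, _root_.map_one, hfN, sub_self]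
  have hqdvd : q ∣ (X : ℂ[X]) ^ N - 1 := minpoly.dvd ℂ f haev
  have hsq : Squarefree ((X : ℂ[X]) ^ N - 1) :=
    (X_pow_sub_one_separable_iff.mpr hN).squarefree
  have hmonic : q.Monic := minpoly.monic hint
  have hsplits : Splits q := IsAlgClosed.splits q
  by_cases hroot : ∃ ζ ∈ q.roots, ζ ≠ 1
  · obtain ⟨ζ, hζmem, hζ1⟩ := hroot
    have hζroot : q.IsRoot ζ := isRoot_of_mem_roots hζmem
    refine ⟨ζ, hζ1, ?_, Module.End.hasEigenvalue_of_isRoot hζroot⟩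
    have : ((X : ℂ[X]) ^ N - 1).IsRoot ζ := hζroot.dvd hqdvd
    have := this
    simpa [sub_eq_zero] using this
  · exfalso
    push_neg at hroot
    have hcard : q.roots.card = q.natDegree := (splits_iff_card_roots).mp hsplits
    have hrep : q.roots = Multiset.replicate q.natDegree 1 := by
      rw [Multiset.eq_replicate]
      exact ⟨hcard, fun b hb => hroot b hb⟩
    have hprod : q = (X - C 1) ^ q.natDegree := by
      have h0 := hsplits.eq_prod_roots_of_monic hmonic
      rw [hrep] at h0
      simpa [Multiset.map_replicate, Multiset.prod_replicate] using h0
    haveI : Nontrivial (Module.End ℂ (Fin d → ℂ)) := ⟨⟨f, 1, hf1⟩⟩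
    have hdeg : 0 < q.natDegree := minpoly.natDegree_pos hint
    have hdeg1 : q.natDegree = 1 := by
      by_contra hne
      have h2 : (X - C (1:ℂ)) * (X - C 1) ∣ (X : ℂ[X]) ^ N - 1 := by
        refine dvd_trans ?_ hqdvd
        rw [hprod, ← pow_two]
        exact pow_dvd_pow _ (by omega)
      have := hsq _ h2
      exact (Polynomial.not_isUnit_X_sub_C (1:ℂ)) this
    have hqX : q = X - C 1 := by rw [hprod, hdeg1, pow_one]
    have := minpoly.aeval ℂ f
    rw [← hq, hqX, map_sub, aeval_X, aeval_C] at this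
    apply hf1
    have : f = (algebraMap ℂ (Module.End ℂ (Fin d → ℂ))) 1 := by
      rwa [sub_eq_zero] at this
    simpa using this

lemma eigen_pow_conj {d : ℕ} (A C C' : Matrix (Fin d) (Fin d) ℂ) (hCC' : C * C' = 1)
    (k : ℕ) (hAC : A * C' = C' * A ^ k) {ζ : ℂ}
    (h : Module.End.HasEigenvalue (Matrix.toLinAlgEquiv' A) ζ) :
    Module.End.HasEigenvalue (Matrix.toLinAlgEquiv' A) (ζ ^ k) := by
  obtain ⟨w, hw⟩ := Module.End.HasEigenvalue.exists_hasEigenvector h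
  have hfw : (Matrix.toLinAlgEquiv' A : Module.End ℂ (Fin d → ℂ)) w = ζ • w := hw.apply_eq_smul
  have hpow : ∀ m : ℕ, ((Matrix.toLinAlgEquiv' A : Module.End ℂ (Fin d → ℂ)) ^ m) w
      = (ζ ^ m) • w := by
    intro m
    induction m with
    | zero => simp
    | succ j ih =>
      rw [pow_succ, Module.End.mul_apply, hfw, _root_.map_smul, ih, smul_smul, pow_succ]
      ring_nf
  set v := Matrix.toLinAlgEquiv' C' w with hv
  have hvne : v ≠ 0 := by
    intro h0
    apply hw.right
    have : Matrix.toLinAlgEquiv' (C * C') w = Matrix.toLinAlgEquiv' C v := by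
      rw [_root_.map_mul]; rfl
    rw [hCC', h0, map_zero, _root_.map_one] at this
    simpa using this
  have hfv : (Matrix.toLinAlgEquiv' A : Module.End ℂ (Fin d → ℂ)) v = (ζ ^ k) • v := by
    have h1 : Matrix.toLinAlgEquiv' A (Matrix.toLinAlgEquiv' C' w)
        = Matrix.toLinAlgEquiv' (A * C') w := by rw [_root_.map_mul]; rfl
    rw [hv, h1, hAC, _root_.map_mul, Module.End.mul_apply, map_pow, hpow, _root_.map_smul]
  exact Module.End.hasEigenvalue_of_hasEigenvector
    ⟨Module.End.mem_eigenspace_iff.mpr hfv, hvne⟩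

end Part2




/-- Every nontrivial complex representation of `SL₂(ℤ/pⁿℤ)` (p ≥ 3 prime, n ≥ 1)
has degree at least `(p - 1)/2`. -/
theorem sl2_nontrivial_rep_dim_lower_bound
    (p n d : ℕ) (hp : p.Prime) (hp3 : 3 ≤ p) (hn : 1 ≤ n) (hd : 1 ≤ d)
    (ρ : Matrix.SpecialLinearGroup (Fin 2) (ZMod (p ^ n)) →* GL (Fin d) ℂ)
    (hnt : ∃ g, ρ g ≠ 1) :
    ((p : ℝ) - 1) / 2 ≤ d := by
  classical
  haveI : Fact p.Prime := ⟨hp⟩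
  haveI : NeZero (p ^ n) := ⟨pow_ne_zero n hp.pos.ne'⟩
  obtain ⟨x0, hx0⟩ : ∃ x : ZMod (p ^ n), ρ (SL2AuxProof.Rm x) ≠ 1 := by
    by_contra h
    push_neg at h
    obtain ⟨g, hg⟩ := hnt
    exact hg (Part2.hom_eq_one (Part2.zmod_hor p n hp hn) ρ h g)
  set A : Matrix (Fin d) (Fin d) ℂ :=
    ((ρ (SL2AuxProof.Rm x0) : GL (Fin d) ℂ) : Matrix (Fin d) (Fin d) ℂ) with hAdef
  have hA1 : A ≠ 1 := by
    intro h
    apply hx0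
    apply Units.ext
    rw [Units.val_one, ← hAdef]
    exact h
  have hApow : A ^ (p ^ n) = 1 := by
    have h1 : (SL2AuxProof.Rm x0) ^ (p ^ n) = 1 := by
      rw [SL2AuxProof.Rm_pow]
      have h2 : (((p ^ n) : ℕ) : ZMod (p ^ n)) = 0 := by
        exact ZMod.natCast_self _
      rw [h2, zero_mul, SL2AuxProof.Rm_zero]
    calc A ^ (p ^ n) = ((ρ (SL2AuxProof.Rm x0) ^ (p ^ n) : GL (Fin d) ℂ) : Matrix (Fin d) (Fin d) ℂ) :=
          (Units.val_pow_eq_pow_val _ _).symm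
      _ = 1 := by rw [← map_pow, h1, _root_.map_one, Units.val_one]
  set f : Module.End ℂ (Fin d → ℂ) := Matrix.toLinAlgEquiv' A with hfdef
  have hf1 : f ≠ 1 := by
    intro h
    apply hA1
    apply Matrix.toLinAlgEquiv'.injective
    rw [_root_.map_one]
    exact h
  have hfN : f ^ (p ^ n) = 1 := by
    rw [hfdef, show (Matrix.toLinAlgEquiv' A : Module.End ℂ (Fin d → ℂ)) ^ (p ^ n)
      = Matrix.toLinAlgEquiv' (A ^ (p ^ n)) from (map_pow _ _ _).symm, hApow, _root_.map_one]
  have hNC : (((p ^ n) : ℕ) : ℂ) ≠ 0 := Nat.cast_ne_zero.mpr (by positivity)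
  obtain ⟨ζ, hζ1, hζN, hζeig⟩ := Part2.exists_eigenvalue_ne_one hNC f hf1 hfN
  have hN0 : (p ^ n) ≠ 0 := by positivity
  have hζ0 : ζ ≠ 0 := by
    intro h
    rw [h, zero_pow hN0] at hζN
    exact zero_ne_one hζN
  have hpord : p ∣ orderOf ζ := by
    have ho1 : orderOf ζ ∣ (p ^ n) := orderOf_dvd_of_pow_eq_one hζN
    obtain ⟨i, hi, hoi⟩ := (Nat.dvd_prime_pow hp).mp ho1
    rcases Nat.eq_zero_or_pos i with h0 | h0
    · exfalso
      rw [h0, pow_zero] at hoi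
      exact hζ1 (orderOf_eq_one_iff.mp hoi)
    · rw [hoi]
      exact dvd_pow_self p h0.ne'
  -- eigenvalue closure under taking squares of units
  have hstep : ∀ t : ℕ, 1 ≤ t → t ≤ (p - 1) / 2 →
      Module.End.HasEigenvalue f (ζ ^ (t ^ 2)) := by
    intro t ht1 ht2
    have htp : t < p := by omega
    have hcop : t.Coprime (p ^ n) := by
      apply Nat.Coprime.pow_right
      exact ((Nat.Prime.coprime_iff_not_dvd hp).mpr
        (fun hdvd => by have := Nat.le_of_dvd (by omega) hdvd; omega)).symm
    have hu : IsUnit ((t : ℕ) : ZMod (p ^ n)) := (ZMod.isUnit_iff_coprime t (p ^ n)).mpr hcop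
    set u := hu.unit with hudef
    have huval : (u : ZMod (p ^ n)) = ((t : ℕ) : ZMod (p ^ n)) := hu.unit_spec
    have hconjSL : SL2AuxProof.Dm u * SL2AuxProof.Rm x0 * (SL2AuxProof.Dm u)⁻¹
        = (SL2AuxProof.Rm x0) ^ (t ^ 2) := by
      rw [SL2AuxProof.Dm_conj, SL2AuxProof.Rm_pow, huval]
      congr 1
      push_cast
      ring
    have hGL : ρ (SL2AuxProof.Dm u) * ρ (SL2AuxProof.Rm x0) * (ρ (SL2AuxProof.Dm u))⁻¹
        = (ρ (SL2AuxProof.Rm x0)) ^ (t ^ 2) := by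
      rw [← _root_.map_inv, ← _root_.map_mul, ← _root_.map_mul, hconjSL, map_pow]
    set g := ρ (SL2AuxProof.Dm u) with hgdef
    have hunits : (ρ (SL2AuxProof.Rm x0)) * g⁻¹ = g⁻¹ * (ρ (SL2AuxProof.Rm x0)) ^ (t ^ 2) := by
      rw [← hGL]
      group
    have hmat : A * ((g⁻¹ : GL (Fin d) ℂ) : Matrix (Fin d) (Fin d) ℂ)
        = ((g⁻¹ : GL (Fin d) ℂ) : Matrix (Fin d) (Fin d) ℂ) * A ^ (t ^ 2) := by
      have h3 := congrArg Units.val hunits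
      simpa [Units.val_mul, Units.val_pow_eq_pow_val] using h3
    have hCC' : ((g : GL (Fin d) ℂ) : Matrix (Fin d) (Fin d) ℂ) *
        ((g⁻¹ : GL (Fin d) ℂ) : Matrix (Fin d) (Fin d) ℂ) = 1 := by
      rw [← Units.val_mul, mul_inv_cancel, Units.val_one]
    exact Part2.eigen_pow_conj A _ _ hCC' (t ^ 2) hmat hζeig
  -- pairwise distinct eigenvalues
  have hne : ∀ x y : ℕ, 1 ≤ y → y < x → x ≤ (p - 1) / 2 → ζ ^ (x ^ 2) ≠ ζ ^ (y ^ 2) := by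
    intro x y hy hyx hxK heq
    have hxy2 : y ^ 2 < x ^ 2 := Nat.pow_lt_pow_left hyx (by norm_num)
    have h1 : ζ ^ (y ^ 2) * ζ ^ (x ^ 2 - y ^ 2) = ζ ^ (y ^ 2) * 1 := by
      rw [mul_one, ← pow_add]
      rw [← heq]
      congr 1
      omega
    have h2 : ζ ^ (x ^ 2 - y ^ 2) = 1 := mul_left_cancel₀ (pow_ne_zero _ hζ0) h1
    have h3 : orderOf ζ ∣ x ^ 2 - y ^ 2 := orderOf_dvd_of_pow_eq_one h2
    have h4 : p ∣ x ^ 2 - y ^ 2 := dvd_trans hpord h3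
    have h5 : x ^ 2 - y ^ 2 = (x - y) * (x + y) := by
      have hle : y ≤ x := le_of_lt hyx
      zify [hle, hxy2.le]
      ring
    rw [h5] at h4
    rcases (Nat.Prime.dvd_mul hp).mp h4 with h | h
    · have := Nat.le_of_dvd (by omega) h
      omega
    · have := Nat.le_of_dvd (by omega) h
      omega
  set K := (p - 1) / 2 with hKdef
  have hKd : K ≤ d := by
    have hμinj : Function.Injective (fun i : Fin K => ζ ^ (((i : ℕ) + 1) ^ 2)) := by
      intro i j hij
      simp only at hij
      rcases lt_trichotomy (i : ℕ) (j : ℕ) with h | h | h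
      · exact absurd hij.symm (hne ((j : ℕ) + 1) ((i : ℕ) + 1) (by omega) (by omega)
          (by have := j.2; omega))
      · exact Fin.ext h
      · exact absurd hij (hne ((i : ℕ) + 1) ((j : ℕ) + 1) (by omega) (by omega)
          (by have := i.2; omega))
    have hvex : ∀ i : Fin K, ∃ v, Module.End.HasEigenvector f (ζ ^ (((i : ℕ) + 1) ^ 2)) v := by
      intro i
      exact (hstep ((i : ℕ) + 1) (by omega) (by have := i.2; omega)).exists_hasEigenvector
    choose v hv using hvex
    have hli := Module.End.eigenvectors_linearIndependent' f
      (fun i : Fin K => ζ ^ (((i : ℕ) + 1) ^ 2)) hμinj v hv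
    have hcard := hli.fintype_card_le_finrank
    simpa using hcard
  -- conclude
  have hodd : p % 2 = 1 := Nat.odd_iff.mp (hp.odd_of_ne_two (by omega))
  have hfinal : p - 1 ≤ 2 * d := by omega
  have hcast := (Nat.cast_le (α := ℝ)).mpr hfinal
  rw [div_le_iff₀ (by norm_num : (0 : ℝ) < 2)]
  push_cast at hcast
  have hp1 : (1 : ℝ) ≤ (p : ℝ) := by exact_mod_cast hp.one_lt.le
  rw [Nat.cast_sub (by omega : 1 ≤ p)] at hcast
  push_cast at hcast
  linarith
end

section
/- Let p ≥ 3 be a prime and n ≥ 1. Every faithful complex representation of the group SL₂(ℤ/p^nℤ) has degree at least (p^n − p^{n−1})/2; that is, if ρ : SL₂(ℤ/p^nℤ) → GL_d(ℂ) is an injective group homomorphism, then d ≥ (p^n − p^{n−1})/2. -/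
open Matrix Polynomial

/-- The unipotent upper-triangular homomorphism `a ↦ [[1,a],[0,1]]`. -/
def utHom (R : Type*) [CommRing R] :
    Multiplicative R →* Matrix.SpecialLinearGroup (Fin 2) R where
  toFun a := ⟨!![1, a.toAdd; 0, 1], by simp [Matrix.det_fin_two_of]⟩
  map_one' := by
    apply Subtype.ext
    show !![1, Multiplicative.toAdd 1; 0, 1] = (1 : Matrix (Fin 2) (Fin 2) R)
    rw [toAdd_one, Matrix.one_fin_two]
  map_mul' a b := by
    apply Subtype.ext
    show !![1, (a * b).toAdd; 0, 1] =
      !![1, a.toAdd; 0, 1] * !![1, b.toAdd; 0, 1]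
    rw [Matrix.mul_fin_two, toAdd_mul]
    congr 1 <;> ring_nf

lemma utHom_injective (R : Type*) [CommRing R] : Function.Injective (utHom R) := by
  intro a b h
  have h2 := congrArg (fun M => M.val 0 1) h
  exact h2

lemma utHom_pow (R : Type*) [CommRing R] (a : R) (k : ℕ) :
    (utHom R (Multiplicative.ofAdd a)) ^ k = utHom R (Multiplicative.ofAdd (k • a)) := by
  rw [← map_pow, ← ofAdd_nsmul]

-- square roots of 1 in ZMod (p^n), p odd prime
lemma sq_eq_one_cases (p n : ℕ) (hp : p.Prime) (hp3 : 3 ≤ p) (hn : 1 ≤ n)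
    (y : ZMod (p ^ n)) (hy : y ^ 2 = 1) : y = 1 ∨ y = -1 := by
  haveI : NeZero (p ^ n) := ⟨pow_ne_zero n hp.pos.ne'⟩
  set k : ℤ := (y.val : ℤ) with hk
  have hyk : ((k : ℤ) : ZMod (p ^ n)) = y := by
    simp [hk, ZMod.natCast_val, ZMod.cast_id]
  have hdvd : ((p ^ n : ℕ) : ℤ) ∣ (k - 1) * (k + 1) := by
    rw [← ZMod.intCast_zmod_eq_zero_iff_dvd]
    push_cast
    rw [hyk]
    linear_combination hy
  have hpint : Prime (p : ℤ) := Nat.prime_iff_prime_int.mp hp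
  have hnot_both : ¬ ((p : ℤ) ∣ (k - 1) ∧ (p : ℤ) ∣ (k + 1)) := by
    rintro ⟨h1, h2⟩
    have : (p : ℤ) ∣ 2 := by
      have := dvd_sub h2 h1
      simpa using this
    have := Int.le_of_dvd (by norm_num) this
    omega
  rcases Classical.em ((p : ℤ) ∣ (k - 1)) with h1 | h1
  · -- then p ∤ k+1, so p^n ∣ k - 1
    have h2 : ¬ (p : ℤ) ∣ (k + 1) := fun h => hnot_both ⟨h1, h⟩
    have hcop : IsCoprime ((p : ℤ) ^ n) (k + 1) :=
      IsCoprime.pow_left ((hpint.coprime_iff_not_dvd).mpr h2)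
    have : ((p : ℤ) ^ n) ∣ (k - 1) := hcop.dvd_of_dvd_mul_right (by push_cast at hdvd ⊢; exact hdvd)
    left
    have : ((k - 1 : ℤ) : ZMod (p ^ n)) = 0 := by
      rw [ZMod.intCast_zmod_eq_zero_iff_dvd]; push_cast; exact this
    push_cast at this
    rw [hyk, sub_eq_zero] at this
    exact this
  · have hcop : IsCoprime ((p : ℤ) ^ n) (k - 1) :=
      IsCoprime.pow_left ((hpint.coprime_iff_not_dvd).mpr h1)
    have : ((p : ℤ) ^ n) ∣ (k + 1) := hcop.dvd_of_dvd_mul_left (by push_cast at hdvd ⊢; exact hdvd)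
    right
    have : ((k + 1 : ℤ) : ZMod (p ^ n)) = 0 := by
      rw [ZMod.intCast_zmod_eq_zero_iff_dvd]; push_cast; exact this
    push_cast at this
    rw [hyk] at this
    linear_combination this

/-- Every faithful complex representation of `SL₂(ℤ/pⁿℤ)` (p ≥ 3 prime, n ≥ 1)
has degree at least `(pⁿ - pⁿ⁻¹)/2`. -/
theorem sl2_faithful_rep_dim_lower_bound
    (p n d : ℕ) (hp : p.Prime) (hp3 : 3 ≤ p) (hn : 1 ≤ n) (hd : 1 ≤ d)
    (ρ : Matrix.SpecialLinearGroup (Fin 2) (ZMod (p ^ n)) →* GL (Fin d) ℂ)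
    (hinj : Function.Injective ρ) :
    ((p : ℝ) ^ n - (p : ℝ) ^ (n - 1)) / 2 ≤ d := by
  haveI : NeZero (p ^ n) := ⟨pow_ne_zero n hp.pos.ne'⟩
  have hNpos : 0 < p ^ n := pow_pos hp.pos n
  -- the unipotent element and its order
  set u := utHom (ZMod (p ^ n)) (Multiplicative.ofAdd 1) with hu
  have hord : orderOf u = p ^ n := by
    rw [hu, orderOf_injective _ (utHom_injective _), orderOf_ofAdd_eq_addOrderOf,
      ZMod.addOrderOf_one]
  -- transfer to endomorphisms
  let e : Matrix (Fin d) (Fin d) ℂ ≃ₐ[ℂ] Module.End ℂ (Fin d → ℂ) := Matrix.toLinAlgEquiv'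
  let τ : GL (Fin d) ℂ →* Module.End ℂ (Fin d → ℂ) :=
    e.toAlgHom.toRingHom.toMonoidHom.comp (Units.coeHom _)
  have hτinj : Function.Injective τ := fun a b hab => Units.ext (e.injective hab)
  set f := τ (ρ u) with hf
  have hfo : orderOf f = p ^ n := by
    rw [hf, orderOf_injective τ hτinj, orderOf_injective ρ hinj, hord]
  have hf1 : f ^ (p ^ n) = 1 := by rw [← hfo]; exact pow_orderOf_eq_one f
  have hf2 : f ^ (p ^ (n - 1)) ≠ 1 := by
    intro h
    have hdvd := orderOf_dvd_of_pow_eq_one h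
    rw [hfo] at hdvd
    have h1 := Nat.le_of_dvd (pow_pos hp.pos _) hdvd
    have h2 : p ^ (n - 1) < p ^ n := Nat.pow_lt_pow_right hp.one_lt (by omega)
    omega
  -- minimal polynomial
  set q : Polynomial ℂ := Polynomial.X ^ (p ^ n) - Polynomial.C 1 with hq
  have hq_monic : q.Monic := Polynomial.monic_X_pow_sub_C 1 hNpos.ne'
  have hq_aeval : Polynomial.aeval f q = 0 := by
    rw [hq]
    simp [hf1]
  have hInt : IsIntegral ℂ f := ⟨q, hq_monic, hq_aeval⟩
  set μ : Polynomial ℂ := minpoly ℂ f with hμ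
  have hμ0 : μ ≠ 0 := minpoly.ne_zero hInt
  have hμq : μ ∣ q := minpoly.dvd ℂ f hq_aeval
  have hqsep : q.Separable := by
    rw [hq]
    exact Polynomial.separable_X_pow_sub_C (1 : ℂ)
      (by exact_mod_cast Nat.cast_ne_zero.mpr hNpos.ne') one_ne_zero
  have hμsep : μ.Separable := hqsep.of_dvd hμq
  have hμrootN : ∀ z : ℂ, μ.IsRoot z → z ^ (p ^ n) = 1 := by
    intro z hz
    obtain ⟨c, hc⟩ := hμq
    have hveq : Polynomial.eval z μ = 0 := hz
    have hqz : Polynomial.eval z q = 0 := by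
      rw [hc, Polynomial.eval_mul, hveq, zero_mul]
    rw [hq] at hqz
    simpa [sub_eq_zero] using hqz
  -- there is a root of μ of exact order p ^ n
  have hζex : ∃ z : ℂ, μ.IsRoot z ∧ z ^ (p ^ (n - 1)) ≠ 1 := by
    by_contra hcon
    push_neg at hcon
    set r : Polynomial ℂ := Polynomial.X ^ (p ^ (n - 1)) - Polynomial.C 1 with hr
    have hr0 : r ≠ 0 := (Polynomial.monic_X_pow_sub_C 1 (pow_pos hp.pos (n - 1)).ne').ne_zero
    have hle : μ.roots ≤ r.roots := by
      rw [Multiset.le_iff_count]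
      intro z
      by_cases hz : z ∈ μ.roots
      · have h1 : μ.roots.count z ≤ 1 := by
          rw [Polynomial.count_roots]
          exact Polynomial.rootMultiplicity_le_one_of_separable hμsep z
        have hzroot : μ.IsRoot z := (Polynomial.mem_roots'.mp hz).2
        have hzr : z ∈ r.roots := by
          rw [Polynomial.mem_roots hr0]
          have hz1 := hcon z hzroot
          rw [hr]
          simp [sub_eq_zero, hz1]
        exact h1.trans (Multiset.one_le_count_iff_mem.mpr hzr)
      · rw [Multiset.count_eq_zero_of_notMem hz]
        exact Nat.zero_le _
    have hdvd2 : μ ∣ r :=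
      (IsAlgClosed.splits μ).dvd_of_roots_le_roots hμ0 hle
    apply hf2
    obtain ⟨c, hc⟩ := hdvd2
    have haev : Polynomial.aeval f r = 0 := by
      rw [hc, _root_.map_mul, minpoly.aeval, zero_mul]
    rw [hr] at haev
    simp only [map_sub, map_pow, Polynomial.aeval_X, Polynomial.aeval_C, _root_.map_one,
      sub_eq_zero] at haev
    simpa using haev
  obtain ⟨ζ, hζroot, hζne⟩ := hζex
  have hζN : ζ ^ (p ^ n) = 1 := hμrootN ζ hζroot
  have hoζ : orderOf ζ = p ^ n := by
    have hdvd := orderOf_dvd_of_pow_eq_one hζN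
    obtain ⟨m, hm, hmo⟩ := (Nat.dvd_prime_pow hp).mp hdvd
    rcases eq_or_lt_of_le hm with h | h
    · rw [hmo, h]
    · exfalso
      apply hζne
      have h1 : ζ ^ (p ^ m) = 1 := by rw [← hmo]; exact pow_orderOf_eq_one ζ
      have hexp : p ^ (n - 1) = p ^ m * p ^ (n - 1 - m) := by
        rw [← pow_add]
        congr 1
        omega
      rw [hexp, pow_mul, h1, one_pow]
  have hprim : IsPrimitiveRoot ζ (p ^ n) := by
    have h := IsPrimitiveRoot.orderOf ζ
    rwa [hoζ] at h
  -- conjugation: each ζ^((t²).val) is an eigenvalue of f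
  have hζeig : Module.End.HasEigenvalue f ζ :=
    Module.End.hasEigenvalue_iff_isRoot.mpr hζroot
  have key : ∀ t : (ZMod (p ^ n))ˣ,
      Module.End.HasEigenvalue f (ζ ^ (((t : ZMod (p ^ n)) ^ 2).val)) := by
    intro t
    set g : Matrix.SpecialLinearGroup (Fin 2) (ZMod (p ^ n)) :=
      ⟨!![(t : ZMod (p ^ n)), 0; 0, ((t⁻¹ : (ZMod (p ^ n))ˣ) : ZMod (p ^ n))], by
        simp [Matrix.det_fin_two_of, ← Units.val_mul]⟩ with hg
    have hgu : g * u = utHom (ZMod (p ^ n)) (Multiplicative.ofAdd ((t : ZMod (p ^ n)) ^ 2)) * g := by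
      apply Subtype.ext
      rw [Matrix.SpecialLinearGroup.coe_mul, Matrix.SpecialLinearGroup.coe_mul]
      show (!![(t : ZMod (p ^ n)), 0; 0, ((t⁻¹ : (ZMod (p ^ n))ˣ) : ZMod (p ^ n))] *
        !![1, Multiplicative.toAdd (Multiplicative.ofAdd (1 : ZMod (p ^ n))); 0, 1]) =
        !![1, Multiplicative.toAdd (Multiplicative.ofAdd ((t : ZMod (p ^ n)) ^ 2)); 0, 1] *
        !![(t : ZMod (p ^ n)), 0; 0, ((t⁻¹ : (ZMod (p ^ n))ˣ) : ZMod (p ^ n))]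
      rw [toAdd_ofAdd, toAdd_ofAdd, Matrix.mul_fin_two, Matrix.mul_fin_two]
      simp [sq, mul_assoc, ← Units.val_mul]
    set k : ℕ := ((t : ZMod (p ^ n)) ^ 2).val with hkdef
    have hk : u ^ k = utHom (ZMod (p ^ n)) (Multiplicative.ofAdd ((t : ZMod (p ^ n)) ^ 2)) := by
      rw [hu, utHom_pow]
      congr 2
      rw [nsmul_eq_mul, mul_one, hkdef, ZMod.natCast_val, ZMod.cast_id]
    have hconj : g * u * g⁻¹ = u ^ k := by
      rw [hk, mul_inv_eq_iff_eq_mul, hgu]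
    have hπconj : τ (ρ g) * f * τ (ρ g⁻¹) = f ^ k := by
      rw [hf, ← map_pow τ, ← map_pow ρ, ← hconj]
      simp only [_root_.map_mul]
    have hinv1 : τ (ρ g⁻¹) * τ (ρ g) = 1 := by
      rw [← _root_.map_mul, ← _root_.map_mul, inv_mul_cancel, _root_.map_one, _root_.map_one]
    have hinv2 : τ (ρ g) * τ (ρ g⁻¹) = 1 := by
      rw [← _root_.map_mul, ← _root_.map_mul, mul_inv_cancel, _root_.map_one, _root_.map_one]
    obtain ⟨v, hv⟩ := hζeig.exists_hasEigenvector
    have hcomm : f * τ (ρ g⁻¹) = τ (ρ g⁻¹) * f ^ k := by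
      calc f * τ (ρ g⁻¹) = (τ (ρ g⁻¹) * τ (ρ g)) * f * τ (ρ g⁻¹) := by rw [hinv1, one_mul]
        _ = τ (ρ g⁻¹) * (τ (ρ g) * f * τ (ρ g⁻¹)) := by
            rw [mul_assoc (τ (ρ g⁻¹)) (τ (ρ g)) f, mul_assoc]
        _ = τ (ρ g⁻¹) * f ^ k := by rw [hπconj]
    apply Module.End.hasEigenvalue_of_hasEigenvector (x := τ (ρ g⁻¹) v)
    constructor
    · rw [Module.End.mem_eigenspace_iff]
      calc f (τ (ρ g⁻¹) v) = (f * τ (ρ g⁻¹)) v := rfl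
        _ = (τ (ρ g⁻¹) * f ^ k) v := by rw [hcomm]
        _ = τ (ρ g⁻¹) ((f ^ k) v) := rfl
        _ = τ (ρ g⁻¹) (ζ ^ k • v) := by rw [hv.pow_apply]
        _ = ζ ^ k • τ (ρ g⁻¹) v := (τ (ρ g⁻¹)).map_smul _ _
    · intro hzero
      apply hv.2
      have hvv : τ (ρ g) (τ (ρ g⁻¹) v) = v := by
        calc τ (ρ g) (τ (ρ g⁻¹) v) = (τ (ρ g) * τ (ρ g⁻¹)) v := rfl
          _ = v := by rw [hinv2]; rfl
      rw [hzero, map_zero] at hvv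
      exact hvv.symm
  -- counting
  classical
  set F : (ZMod (p ^ n))ˣ → ℂ := fun t => ζ ^ (((t : ZMod (p ^ n)) ^ 2).val) with hF
  have hmem : ∀ t : (ZMod (p ^ n))ˣ, F t ∈ μ.roots.toFinset := by
    intro t
    rw [Multiset.mem_toFinset, Polynomial.mem_roots hμ0]
    exact Module.End.hasEigenvalue_iff_isRoot.mp (key t)
  have hcard : (Finset.univ : Finset (ZMod (p ^ n))ˣ).card ≤
      2 * ((Finset.univ : Finset (ZMod (p ^ n))ˣ).image F).card := by
    apply Finset.card_le_mul_card_image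
    intro a ha
    obtain ⟨t₀, _, ht₀⟩ := Finset.mem_image.mp ha
    have hsub : (Finset.univ.filter (fun s => F s = a)) ⊆ ({t₀, -t₀} : Finset _) := by
      intro s hs
      have hFs : F s = F t₀ := by
        rw [ht₀]
        exact (Finset.mem_filter.mp hs).2
      have hval : (((s : ZMod (p ^ n)) ^ 2)).val = (((t₀ : ZMod (p ^ n)) ^ 2)).val :=
        hprim.pow_inj (ZMod.val_lt _) (ZMod.val_lt _) hFs
      have hsq : ((s : ZMod (p ^ n)) ^ 2) = ((t₀ : ZMod (p ^ n)) ^ 2) :=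
        ZMod.val_injective _ hval
      have hsqu : s ^ 2 = t₀ ^ 2 := by
        apply Units.ext
        rw [Units.val_pow_eq_pow_val, Units.val_pow_eq_pow_val]
        exact hsq
      have hx : (s * t₀⁻¹) ^ 2 = 1 := by
        rw [mul_pow, inv_pow, hsqu, mul_inv_cancel]
      have hzm : ((s * t₀⁻¹ : (ZMod (p ^ n))ˣ) : ZMod (p ^ n)) ^ 2 = 1 := by
        rw [← Units.val_pow_eq_pow_val, hx, Units.val_one]
      rcases sq_eq_one_cases p n hp hp3 hn _ hzm with h | h
      · have h1 : s * t₀⁻¹ = 1 := Units.ext (h.trans Units.val_one.symm)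
        have : s = t₀ := by
          rw [mul_inv_eq_one] at h1
          exact h1
        simp [this]
      · have h1 : s * t₀⁻¹ = -1 := Units.ext (by rw [h, Units.val_neg, Units.val_one])
        have : s = -t₀ := by
          rw [mul_inv_eq_iff_eq_mul, neg_one_mul] at h1
          exact h1
        simp [this]
    calc (Finset.univ.filter (fun s => F s = a)).card
        ≤ ({t₀, -t₀} : Finset _).card := Finset.card_le_card hsub
      _ ≤ 2 := by
          apply (Finset.card_insert_le _ _).trans
          simp
  have himage : ((Finset.univ : Finset (ZMod (p ^ n))ˣ).image F).card ≤ d := by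
    have h1 : (Finset.univ : Finset (ZMod (p ^ n))ˣ).image F ⊆ μ.roots.toFinset := by
      intro a ha
      obtain ⟨t, _, rfl⟩ := Finset.mem_image.mp ha
      exact hmem t
    have h2 := Finset.card_le_card h1
    have h3 : μ.roots.toFinset.card ≤ μ.natDegree :=
      (Multiset.toFinset_card_le _).trans μ.card_roots'
    have h4 : μ.natDegree ≤ (LinearMap.charpoly f).natDegree :=
      Polynomial.natDegree_le_of_dvd (LinearMap.minpoly_dvd_charpoly f)
        (LinearMap.charpoly_monic f).ne_zero
    have h5 : (LinearMap.charpoly f).natDegree = d := by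
      rw [LinearMap.charpoly_natDegree]
      exact Module.finrank_fin_fun ℂ
    omega
  have hcardu : (Finset.univ : Finset (ZMod (p ^ n))ˣ).card = (p ^ n).totient := by
    rw [Finset.card_univ]
    exact ZMod.card_units_eq_totient _
  have htot : (p ^ n).totient = p ^ n - p ^ (n - 1) := by
    rw [Nat.totient_prime_pow hp (by omega : 0 < n)]
    cases n with
    | zero => omega
    | succ m =>
      simp only [Nat.succ_sub_one]
      rw [Nat.mul_sub, mul_one, ← pow_succ]
  have hfinal : p ^ n - p ^ (n - 1) ≤ 2 * d := by
    rw [← htot, ← hcardu]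
    exact hcard.trans (by omega)
  rw [div_le_iff₀ (by norm_num : (0:ℝ) < 2)]
  have hple : p ^ (n - 1) ≤ p ^ n := Nat.pow_le_pow_right hp.pos (by omega)
  have hcast := (Nat.cast_le (α := ℝ)).mpr hfinal
  rw [Nat.cast_sub hple] at hcast
  push_cast at hcast ⊢
  linarith
end

section
/- Let p ≥ 3 be a prime, n ≥ 1 and k ≥ 3. Every faithful complex representation of the group SL_k(ℤ/p^nℤ) has degree at least (p^n − p^{n−1})·p^{(k−2)n}; that is, if ρ : SL_k(ℤ/p^nℤ) → GL_d(ℂ) is an injective group homomorphism, then d ≥ (p^n − p^{n−1})·p^{(k−2)n}. -/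
open Matrix

section auxlemmas
open Module Submodule Polynomial

universe u


variable {m : Type*} [Fintype m] [DecidableEq m] {R : Type*} [CommRing R]

lemma tv_mul_of_ne {i j a b : m} (hja : j ≠ a) (c d : R) :
    transvection i j c * transvection a b d
      = 1 + (Matrix.single i j c + Matrix.single a b d) := by
  simp only [transvection, Matrix.mul_add, Matrix.add_mul, Matrix.one_mul, Matrix.mul_one,
    Matrix.single_mul_single_of_ne _ _ _ _ hja]
  abel

lemma tv_mul_mid {i j b : m} (c d : R) :
    transvection i j c * transvection j b d
      = 1 + (Matrix.single i j c + Matrix.single j b d + Matrix.single i b (c * d)) := by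
  simp only [transvection, Matrix.mul_add, Matrix.add_mul, Matrix.one_mul, Matrix.mul_one,
    single_mul_single_same]
  abel

lemma tv_comm {i j a b : m} (hja : j ≠ a) (hbi : b ≠ i) (c d : R) :
    transvection i j c * transvection a b d = transvection a b d * transvection i j c := by
  rw [tv_mul_of_ne hja, tv_mul_of_ne hbi, add_comm (Matrix.single a b d)]

lemma tv_braid {o w K : m} (hwK : w ≠ K) (hoK : o ≠ K) (hKw : K ≠ w) (hKo : K ≠ o)
    (c : R) :
    transvection o w c * transvection w K 1
      = transvection o K c * (transvection w K 1 * transvection o w c) := by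
  rw [tv_mul_mid, tv_mul_of_ne hKo]
  simp only [transvection, Matrix.mul_add, Matrix.add_mul, Matrix.one_mul, Matrix.mul_one,
    Matrix.single_mul_single_of_ne _ _ _ _ hKw, Matrix.single_mul_single_of_ne _ _ _ _ hKo, mul_one]
  abel

lemma diagonal_mul_stdBasisMatrix (d : m → R) (i j : m) (c : R) :
    diagonal d * Matrix.single i j c = Matrix.single i j (d i * c) := by
  ext a b
  rw [Matrix.diagonal_mul]
  by_cases h : i = a ∧ j = b
  · obtain ⟨rfl, rfl⟩ := h; simp
  · rw [single_apply_of_ne (h := h), single_apply_of_ne (h := h), mul_zero]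

lemma stdBasisMatrix_mul_diagonal (d : m → R) (i j : m) (c : R) :
    Matrix.single i j c * diagonal d = Matrix.single i j (c * d j) := by
  ext a b
  rw [Matrix.mul_diagonal]
  by_cases h : i = a ∧ j = b
  · obtain ⟨rfl, rfl⟩ := h; simp
  · rw [single_apply_of_ne (h := h), single_apply_of_ne (h := h), zero_mul]

lemma diag_mul_tv {d : m → R} {i j : m} {c c' : R} (h : d i * c = c' * d j) :
    diagonal d * transvection i j c = transvection i j c' * diagonal d := by
  simp only [transvection, Matrix.mul_add, Matrix.add_mul, Matrix.one_mul, Matrix.mul_one,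
    diagonal_mul_stdBasisMatrix, stdBasisMatrix_mul_diagonal, h]

lemma tv_entry_ne_one {i j : m} (hij : i ≠ j) {c : R} (hc : c ≠ 0) :
    transvection i j c ≠ 1 := by
  intro h
  have := congrFun (congrFun h i) j
  rw [transvection] at this
  simp only [Matrix.add_apply, Matrix.one_apply_ne hij, single_apply_same,
    zero_add] at this
  exact hc this


lemma sum_finrank_eigenspace_le {V : Type*} [AddCommGroup V] [Module ℂ V] [FiniteDimensional ℂ V]
    (f : Module.End ℂ V) (s : Finset ℂ) :
    ∑ μ ∈ s, finrank ℂ (f.eigenspace μ) ≤ finrank ℂ V := by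
  classical
  have key : ∀ s : Finset ℂ, ∑ μ ∈ s, finrank ℂ (f.eigenspace μ) ≤ finrank ℂ (s.sup f.eigenspace : Submodule ℂ V) := by
    intro s
    induction s using Finset.induction with
    | empty => simp
    | @insert a s ha ih =>
        
        rw [Finset.sum_insert ha, Finset.sup_insert]
        have hdisj : Disjoint (f.eigenspace a) (s.sup f.eigenspace) := by
          refine (f.eigenspaces_iSupIndep a).mono_right ?_
          refine Finset.sup_le fun b hb => ?_
          exact le_iSup_of_le b (le_iSup_of_le (by rintro rfl; exact ha hb) le_rfl)
        have := Submodule.finrank_sup_add_finrank_inf_eq (f.eigenspace a) (s.sup f.eigenspace)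
        rw [hdisj.eq_bot, finrank_bot, add_zero] at this
        rw [this]
        exact Nat.add_le_add_left ih _
  exact (key s).trans (Submodule.finrank_le _)


lemma eigenvalue_one {V : Type*} [AddCommGroup V] [Module ℂ V] {μ : ℂ}
    (h : (1 : Module.End ℂ V).HasEigenvalue μ) : μ = 1 := by
  obtain ⟨v, hv⟩ := h.exists_hasEigenvector
  have h1 : (μ - 1) • v = 0 := by
    rw [sub_smul, one_smul, ← hv.apply_eq_smul, show (1 : Module.End ℂ V) v = v from rfl, sub_self]
  rcases smul_eq_zero.1 h1 with h | h
  · exact (sub_eq_zero.1 h)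
  · exact absurd h hv.2

lemma exists_primitive_eigenvalue {V : Type*} [AddCommGroup V] [Module ℂ V]
    [FiniteDimensional ℂ V] (f : Module.End ℂ V) {N M : ℕ} (hN : (N : ℂ) ≠ 0)
    (hfN : f ^ N = 1) (hfM : f ^ M ≠ 1) :
    ∃ μ : ℂ, f.HasEigenvalue μ ∧ μ ^ N = 1 ∧ μ ^ M ≠ 1 := by
  by_contra hcon
  push_neg at hcon
  have heigN : ∀ μ : ℂ, f.HasEigenvalue μ → μ ^ N = 1 := by
    intro μ hμ
    have := hμ.pow N
    rw [hfN] at this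
    exact eigenvalue_one this
  set m := minpoly ℂ f with hm
  have hdvd : m ∣ X ^ N - 1 := by
    apply minpoly.dvd
    simp [hfN]
  have hsep : (X ^ N - 1 : ℂ[X]).Separable := by
    have := separable_X_pow_sub_C (F := ℂ) 1 hN one_ne_zero
    simpa using this
  have msep : m.Separable := hsep.of_dvd hdvd
  have hnd : m.roots.Nodup := nodup_roots msep
  have hmonic : m.Monic := minpoly.monic (Algebra.IsIntegral.isIntegral (R := ℂ) f)
  have hprod : m = (m.roots.map fun a => X - C a).prod :=
    (IsAlgClosed.splits _).eq_prod_roots_of_monic hmonic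
  have hval : m.roots.toFinset.val = m.roots := by
    rw [Multiset.toFinset_val, Multiset.dedup_eq_self.2 hnd]
  have hfin : m = ∏ a ∈ m.roots.toFinset, (X - C a) := by
    rw [Finset.prod_eq_multiset_prod, hval, ← hprod]
  have hdvdM : m ∣ X ^ M - 1 := by
    rw [hfin]
    apply Finset.prod_dvd_of_coprime
    · exact ((pairwise_coprime_X_sub_C (Function.injective_id)).set_pairwise _)
    · intro a ha
      have haroot : m.IsRoot a := isRoot_of_mem_roots (Multiset.mem_toFinset.1 ha)
      have haev : f.HasEigenvalue a := Module.End.hasEigenvalue_of_isRoot haroot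
      have haM : a ^ M = 1 := hcon a haev (heigN a haev)
      rw [dvd_iff_isRoot]
      simp [IsRoot, haM]
  have hz : Polynomial.aeval f (X ^ M - 1 : ℂ[X]) = 0 := by
    obtain ⟨c, hc⟩ := hdvdM
    rw [hc, _root_.map_mul, minpoly.aeval, zero_mul]
  apply hfM
  have h2 : f ^ M - 1 = 0 := by simpa using hz
  rw [sub_eq_zero] at h2; exact h2

lemma heis {N : ℕ} {ζ : ℂ} (hζ : IsPrimitiveRoot ζ N) (hN : 0 < N) :
    ∀ (m : ℕ) (V : Type u) [AddCommGroup V] [Module ℂ V] [FiniteDimensional ℂ V] [Nontrivial V]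
    (A B : Fin m → Module.End ℂ V),
    (∀ i, Function.Injective (A i)) → (∀ i, Function.Injective (B i)) →
    (∀ i v, A i (B i v) = ζ • B i (A i v)) →
    (∀ i j, i ≠ j → ∀ v, A i (A j v) = A j (A i v)) →
    (∀ i j, i ≠ j → ∀ v, A i (B j v) = B j (A i v)) →
    (∀ i j, i ≠ j → ∀ v, B i (B j v) = B j (B i v)) →
    N ^ m ≤ finrank ℂ V := by
  intro m
  induction m with
  | zero =>
      intro V _ _ _ _ A B _ _ _ _ _ _
      rw [pow_zero]; exact Module.finrank_pos (R := ℂ) (M := V)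
  | succ m ih =>
      intro V _ _ _ _ A B hAinj hBinj hrel hAA hAB hBB
      classical
      obtain ⟨lam, hlam⟩ := Module.End.exists_eigenvalue (A 0)
      have hlam0 : lam ≠ 0 := by
        rintro rfl
        have : Module.End.eigenspace (A 0) 0 ≠ ⊥ := hlam
        rw [Module.End.eigenspace_zero, LinearMap.ker_eq_bot.2 (hAinj 0)] at this
        exact this rfl
      set E : ℕ → Submodule ℂ V := fun j => Module.End.eigenspace (A 0) (ζ ^ j * lam) with hE
      -- B 0 shifts eigenspaces
      have hB0 : ∀ j v, v ∈ E j → B 0 v ∈ E (j + 1) := by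
        intro j v hv
        rw [hE] at hv ⊢
        rw [Module.End.mem_eigenspace_iff] at hv ⊢
        rw [hrel 0 v, hv, (B 0).map_smul, smul_smul]
        congr 1
        ring
      -- all eigenspaces are nonzero
      have hEne : ∀ j, E j ≠ ⊥ := by
        intro j
        induction j with
        | zero =>
            have : Module.End.eigenspace (A 0) lam ≠ ⊥ := hlam
            simpa [hE] using this
        | succ j ihj =>
            obtain ⟨v, hv, hv0⟩ := Submodule.exists_mem_ne_zero_of_ne_bot ihj
            refine Submodule.ne_bot_iff _ |>.2 ⟨B 0 v, hB0 j v hv, fun h => hv0 ?_⟩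
            exact hBinj 0 (by simpa using h)
      -- eigenspaces are invariant under the other operators
      have hinvA : ∀ (i : Fin m) (j : ℕ) (v : V), v ∈ E j → A i.succ v ∈ E j := by
        intro i j v hv
        rw [hE, Module.End.mem_eigenspace_iff] at hv ⊢
        rw [hAA 0 i.succ (by simp [Fin.ext_iff]) v, hv]
        exact (A i.succ).map_smul _ _
      have hinvB : ∀ (i : Fin m) (j : ℕ) (v : V), v ∈ E j → B i.succ v ∈ E j := by
        intro i j v hv
        rw [hE, Module.End.mem_eigenspace_iff] at hv ⊢
        rw [hAB 0 i.succ (by simp [Fin.ext_iff]) v, hv]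
        exact (B i.succ).map_smul _ _
      -- each eigenspace has dimension ≥ N^m by induction
      have hdim : ∀ j : ℕ, N ^ m ≤ finrank ℂ (E j) := by
        intro j
        haveI : Nontrivial (E j) := Submodule.nontrivial_iff_ne_bot.2 (hEne j)
        set A' : Fin m → Module.End ℂ (E j) :=
          fun i => (A i.succ).restrict (fun v hv => hinvA i j v hv) with hA'
        set B' : Fin m → Module.End ℂ (E j) :=
          fun i => (B i.succ).restrict (fun v hv => hinvB i j v hv) with hB'
        refine ih (E j) A' B' ?_ ?_ ?_ ?_ ?_ ?_
        · intro i x y hxy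
          exact Subtype.ext (hAinj i.succ (congrArg Subtype.val hxy))
        · intro i x y hxy
          exact Subtype.ext (hBinj i.succ (congrArg Subtype.val hxy))
        · intro i v
          apply Subtype.ext
          simpa [hA', hB', LinearMap.restrict_apply] using hrel i.succ v.val
        · intro i i' hii' v
          apply Subtype.ext
          simpa [hA', LinearMap.restrict_apply] using
            hAA i.succ i'.succ (by simpa [Fin.ext_iff] using hii') v.val
        · intro i i' hii' v
          apply Subtype.ext
          simpa [hA', hB', LinearMap.restrict_apply] using
            hAB i.succ i'.succ (by simpa [Fin.ext_iff] using hii') v.val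
        · intro i i' hii' v
          apply Subtype.ext
          simpa [hB', LinearMap.restrict_apply] using
            hBB i.succ i'.succ (by simpa [Fin.ext_iff] using hii') v.val
      -- sum up over the N distinct eigenvalues
      have hinj : Set.InjOn (fun j : ℕ => ζ ^ j * lam) (Finset.range N) := by
        intro a ha b hb hab
        simp only [Finset.coe_range, Set.mem_Iio] at ha hb
        exact hζ.pow_inj ha hb (mul_right_cancel₀ hlam0 hab)
      calc N ^ (m + 1) = ∑ _j ∈ Finset.range N, N ^ m := by
            simp [Finset.sum_const, pow_succ, mul_comm]
        _ ≤ ∑ j ∈ Finset.range N, finrank ℂ (E j) := Finset.sum_le_sum fun j _ => hdim j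
        _ = ∑ μ ∈ (Finset.range N).image (fun j => ζ ^ j * lam),
              finrank ℂ (Module.End.eigenspace (A 0) μ) := by
            rw [Finset.sum_image (fun a ha b hb hab => hinj ha hb hab)]
        _ ≤ finrank ℂ V := sum_finrank_eigenspace_le _ _

lemma core (G : Type) [Group G] {d m p n : ℕ} (hd : 1 ≤ d) (hp : p.Prime) (hn : 1 ≤ n)
    (φ : G →* Module.End ℂ (Fin d → ℂ))
    (hφunit : ∀ g, IsUnit (φ g))
    (z : G) (a b : Fin m → G)
    (hzN : z ^ (p ^ n) = 1) (hzM : φ (z ^ p ^ (n - 1)) ≠ 1)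
    (hrel : ∀ i, a i * b i = z * (b i * a i))
    (hza : ∀ i, z * a i = a i * z) (hzb : ∀ i, z * b i = b i * z)
    (haa : ∀ i j : Fin m, i ≠ j → a i * a j = a j * a i)
    (hab : ∀ i j : Fin m, i ≠ j → a i * b j = b j * a i)
    (hbb : ∀ i j : Fin m, i ≠ j → b i * b j = b j * b i)
    (hconj : ∀ t : ℕ, t.Coprime (p ^ n) → ∃ g : G, g * z = z ^ t * g) :
    Nat.totient (p ^ n) * (p ^ n) ^ m ≤ d := by
  classical
  set N := p ^ n with hNdef
  have hN0 : 0 < N := pow_pos hp.pos n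
  have hNC : (N : ℂ) ≠ 0 := Nat.cast_ne_zero.2 hN0.ne'
  set F : Module.End ℂ (Fin d → ℂ) := φ z with hF
  have hFN : F ^ N = 1 := by rw [hF, ← map_pow, hzN, _root_.map_one]
  have hFM : F ^ (p ^ (n - 1)) ≠ 1 := by rw [hF, ← map_pow]; exact hzM
  obtain ⟨ζ, hζeig, hζN, hζM⟩ := exists_primitive_eigenvalue F hNC hFN hFM
  -- ζ is a primitive N-th root of unity
  have hζprim : IsPrimitiveRoot ζ N := by
    have hdvd : orderOf ζ ∣ N := orderOf_dvd_of_pow_eq_one hζN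
    obtain ⟨i, hi, hiord⟩ := (Nat.dvd_prime_pow hp).1 hdvd
    have : i = n := by
      by_contra hne
      have hi' : i ≤ n - 1 := by omega
      have : orderOf ζ ∣ p ^ (n - 1) := hiord ▸ pow_dvd_pow p hi'
      exact hζM (orderOf_dvd_iff_pow_eq_one.1 this)
    have : orderOf ζ = N := by rw [hiord, this]
    exact this ▸ IsPrimitiveRoot.orderOf ζ
  haveI : NeZero N := ⟨hN0.ne'⟩
  -- every primitive N-th root of unity is an eigenvalue of F with big eigenspace
  have key : ∀ μ ∈ primitiveRoots N ℂ, N ^ m ≤ finrank ℂ (F.eigenspace μ) := by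
    intro μ hμmem
    have hμprim : IsPrimitiveRoot μ N := (mem_primitiveRoots hN0).1 hμmem
    obtain ⟨t, htN, htζ⟩ := hζprim.eq_pow_of_pow_eq_one hμprim.pow_eq_one
    have htcop : t.Coprime N := by
      rw [← hζprim.pow_iff_coprime hN0 t]
      rw [htζ]; exact hμprim
    -- the eigenspace is nonzero
    obtain ⟨g, hg⟩ := hconj t htcop
    have hEne : F.eigenspace μ ≠ ⊥ := by
      obtain ⟨v, hv⟩ := hζeig.exists_hasEigenvector
      have hgzinv : z * g⁻¹ = g⁻¹ * z ^ t := by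
        calc z * g⁻¹ = g⁻¹ * (g * z) * g⁻¹ := by group
          _ = g⁻¹ * (z ^ t * g) * g⁻¹ := by rw [hg]
          _ = g⁻¹ * z ^ t := by group
      set x := φ g⁻¹ v with hx
      have hx0 : x ≠ 0 := by
        intro h0
        have : φ g (φ g⁻¹ v) = 0 := by rw [← hx, h0, map_zero]
        rw [← Module.End.mul_apply, ← _root_.map_mul, mul_inv_cancel, _root_.map_one] at this
        exact hv.2 (by simpa using this)
      have hxe : F x = μ • x := by
        have h1 : F (φ g⁻¹ v) = φ (z * g⁻¹) v := by
          rw [_root_.map_mul, Module.End.mul_apply]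
        rw [hx, h1, hgzinv, _root_.map_mul, Module.End.mul_apply, map_pow]
        have : (φ z ^ t) v = ζ ^ t • v := hv.pow_apply t
        rw [this, (φ g⁻¹).map_smul, htζ]
      intro hbot
      have : x ∈ F.eigenspace μ := Module.End.mem_eigenspace_iff.2 hxe
      rw [hbot, Submodule.mem_bot] at this
      exact hx0 this
    haveI : Nontrivial (F.eigenspace μ) := Submodule.nontrivial_iff_ne_bot.2 hEne
    -- operators preserve the eigenspace
    have hinv : ∀ (g : G), (z * g = g * z) → ∀ v ∈ F.eigenspace μ, φ g v ∈ F.eigenspace μ := by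
      intro g hgz v hv
      rw [Module.End.mem_eigenspace_iff] at hv ⊢
      calc F (φ g v) = φ (z * g) v := by rw [_root_.map_mul, Module.End.mul_apply]
        _ = φ g (F v) := by rw [hgz, _root_.map_mul, Module.End.mul_apply]
        _ = μ • φ g v := by rw [hv, (φ g).map_smul]
    set A : Fin m → Module.End ℂ (F.eigenspace μ) :=
      fun i => (φ (a i)).restrict (fun v hv => hinv (a i) (hza i) v hv) with hA
    set B : Fin m → Module.End ℂ (F.eigenspace μ) :=
      fun i => (φ (b i)).restrict (fun v hv => hinv (b i) (hzb i) v hv) with hB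
    have hφinj : ∀ g : G, Function.Injective (φ g) :=
      fun g => ((Module.End.isUnit_iff _).1 (hφunit g)).injective
    refine heis hμprim hN0 m (F.eigenspace μ) A B ?_ ?_ ?_ ?_ ?_ ?_
    · intro i x y hxy
      exact Subtype.ext (hφinj (a i) (congrArg Subtype.val hxy))
    · intro i x y hxy
      exact Subtype.ext (hφinj (b i) (congrArg Subtype.val hxy))
    · intro i v
      apply Subtype.ext
      have hmem : φ (b i) (φ (a i) v.val) ∈ F.eigenspace μ :=
        hinv (b i) (hzb i) _ (hinv (a i) (hza i) _ v.2)
      have hcalc : φ (a i) (φ (b i) v.val) = μ • φ (b i) (φ (a i) v.val) := by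
        have h1 : φ (a i) (φ (b i) v.val) = φ (a i * b i) v.val := by
          rw [_root_.map_mul, Module.End.mul_apply]
        rw [h1, hrel i, _root_.map_mul, Module.End.mul_apply, _root_.map_mul, Module.End.mul_apply]
        exact Module.End.mem_eigenspace_iff.1 hmem
      simpa [hA, hB, LinearMap.restrict_apply] using hcalc
    · intro i j hij v
      apply Subtype.ext
      have : φ (a i) (φ (a j) v.val) = φ (a j) (φ (a i) v.val) := by
        rw [← Module.End.mul_apply, ← _root_.map_mul, haa i j hij, _root_.map_mul, Module.End.mul_apply]
      simpa [hA, LinearMap.restrict_apply] using this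
    · intro i j hij v
      apply Subtype.ext
      have : φ (a i) (φ (b j) v.val) = φ (b j) (φ (a i) v.val) := by
        rw [← Module.End.mul_apply, ← _root_.map_mul, hab i j hij, _root_.map_mul, Module.End.mul_apply]
      simpa [hA, hB, LinearMap.restrict_apply] using this
    · intro i j hij v
      apply Subtype.ext
      have : φ (b i) (φ (b j) v.val) = φ (b j) (φ (b i) v.val) := by
        rw [← Module.End.mul_apply, ← _root_.map_mul, hbb i j hij, _root_.map_mul, Module.End.mul_apply]
      simpa [hB, LinearMap.restrict_apply] using this
  -- sum over all primitive roots
  calc Nat.totient N * N ^ m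
      = ∑ _μ ∈ primitiveRoots N ℂ, N ^ m := by
        rw [Finset.sum_const, smul_eq_mul, hζprim.card_primitiveRoots]
    _ ≤ ∑ μ ∈ primitiveRoots N ℂ, finrank ℂ (F.eigenspace μ) :=
        Finset.sum_le_sum key
    _ ≤ finrank ℂ (Fin d → ℂ) := sum_finrank_eigenspace_le F _
    _ = d := by simp

end auxlemmas

section grouplemmas
variable {R : Type*} [CommRing R] {m : Type*} [Fintype m] [DecidableEq m]
/-- transvection as element of the special linear group -/
def Tv (i j : m) (hij : i ≠ j) (c : R) : SpecialLinearGroup m R :=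
  ⟨transvection i j c, det_transvection_of_ne i j hij c⟩

lemma Tv_mul (i j : m) (hij : i ≠ j) (c d : R) :
    Tv i j hij c * Tv i j hij d = Tv i j hij (c + d) :=
  Subtype.ext (transvection_mul_transvection_same i j hij c d)

lemma Tv_pow (i j : m) (hij : i ≠ j) (t : ℕ) :
    (Tv i j hij (1 : R)) ^ t = Tv i j hij (t : R) := by
  induction t with
  | zero => exact Subtype.ext (by rw [pow_zero]; simp [Tv])
  | succ t ih => rw [pow_succ, ih, Tv_mul]; norm_num


end grouplemmas

/-- Every faithful complex representation of `SL_k(ℤ/pⁿℤ)` (p ≥ 3 prime, n ≥ 1, k ≥ 3)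
has degree at least `(pⁿ - pⁿ⁻¹) · p^((k-2)n)`. -/
theorem slk_faithful_rep_dim_lower_bound
    (p n k d : ℕ) (hp : p.Prime) (hp3 : 3 ≤ p) (hn : 1 ≤ n) (hk : 3 ≤ k) (hd : 1 ≤ d)
    (ρ : Matrix.SpecialLinearGroup (Fin k) (ZMod (p ^ n)) →* GL (Fin d) ℂ)
    (hinj : Function.Injective ρ) :
    ((p : ℝ) ^ n - (p : ℝ) ^ (n - 1)) * (p : ℝ) ^ ((k - 2) * n) ≤ d := by
  classical
  haveI : NeZero k := ⟨by omega⟩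
  -- the representation as endomorphisms
  set φ : Matrix.SpecialLinearGroup (Fin k) (ZMod (p ^ n)) →* Module.End ℂ (Fin d → ℂ) :=
    (Units.coeHom (Module.End ℂ (Fin d → ℂ))).comp
      ((Matrix.GeneralLinearGroup.toLin.toMonoidHom).comp ρ) with hφ
  have hφunit : ∀ g, IsUnit (φ g) := fun g => (Matrix.GeneralLinearGroup.toLin (ρ g)).isUnit
  have hφinj : Function.Injective φ := by
    intro x y hxy
    apply hinj
    apply Matrix.GeneralLinearGroup.toLin.injective
    exact Units.ext hxy
  -- indices
  set K : Fin k := ⟨k - 1, by omega⟩ with hKdef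
  have hK0 : (0 : Fin k) ≠ K := by simp [Fin.ext_iff, hKdef]; omega
  set w : Fin (k - 2) → Fin k := fun i => ⟨i.val + 1, by omega⟩ with hwdef
  have hw0 : ∀ i, (0 : Fin k) ≠ w i := by intro i; simp [Fin.ext_iff, hwdef]
  have hwK : ∀ i, w i ≠ K := by
    intro i; have := i.2; simp [Fin.ext_iff, hwdef, hKdef]; omega
  have hwinj : ∀ i j : Fin (k-2), i ≠ j → w i ≠ w j := by
    intro i j hij h
    apply hij
    apply Fin.ext
    have := congrArg Fin.val h
    simpa [hwdef] using this
  -- group elements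
  set z : Matrix.SpecialLinearGroup (Fin k) (ZMod (p ^ n)) := Tv 0 K hK0 1 with hz
  set a : Fin (k - 2) → Matrix.SpecialLinearGroup (Fin k) (ZMod (p ^ n)) :=
    fun i => Tv 0 (w i) (hw0 i) 1 with ha
  set b : Fin (k - 2) → Matrix.SpecialLinearGroup (Fin k) (ZMod (p ^ n)) :=
    fun i => Tv (w i) K (hwK i) 1 with hb
  have hzpow : ∀ t : ℕ, z ^ t = Tv 0 K hK0 (t : ZMod (p ^ n)) := fun t => Tv_pow 0 K hK0 t
  have hzN : z ^ (p ^ n) = 1 := by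
    rw [hzpow]
    apply Subtype.ext
    simp [Tv, ZMod.natCast_self]
  have hzM : φ (z ^ p ^ (n - 1)) ≠ 1 := by
    intro h
    have h1 : z ^ p ^ (n - 1) = 1 := hφinj (by rw [h, _root_.map_one])
    rw [hzpow] at h1
    have h2 : ((p ^ (n - 1) : ℕ) : ZMod (p ^ n)) ≠ 0 := by
      rw [Ne, ZMod.natCast_eq_zero_iff]
      intro hdvd
      have := Nat.le_of_dvd (pow_pos hp.pos _) hdvd
      have := pow_lt_pow_right₀ hp.one_lt (by omega : n - 1 < n)
      omega
    exact tv_entry_ne_one hK0 h2 (congrArg Subtype.val h1)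
  have hrel : ∀ i, a i * b i = z * (b i * a i) := by
    intro i
    apply Subtype.ext
    show transvection 0 (w i) 1 * transvection (w i) K 1
      = transvection 0 K 1 * (transvection (w i) K 1 * transvection 0 (w i) 1)
    exact tv_braid (hwK i) hK0 (fun h => hwK i h.symm) (fun h => hK0 h.symm) 1
  have hza : ∀ i, z * a i = a i * z := by
    intro i
    exact Subtype.ext (tv_comm (fun h => hK0 h.symm) (fun h => hw0 i h.symm) 1 1)
  have hzb : ∀ i, z * b i = b i * z := by
    intro i
    exact Subtype.ext (tv_comm (fun h => (hwK i) h.symm) (fun h => hK0 h.symm) 1 1)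
  have haa : ∀ i j, i ≠ j → a i * a j = a j * a i := by
    intro i j _
    exact Subtype.ext (tv_comm (fun h => hw0 i h.symm) (fun h => hw0 j h.symm) 1 1)
  have hab : ∀ i j, i ≠ j → a i * b j = b j * a i := by
    intro i j hij
    exact Subtype.ext (tv_comm (hwinj i j hij) (fun h => hK0 h.symm) 1 1)
  have hbb : ∀ i j, i ≠ j → b i * b j = b j * b i := by
    intro i j _
    exact Subtype.ext (tv_comm (fun h => (hwK j) h.symm) (fun h => (hwK i) h.symm) 1 1)
  have hconj : ∀ t : ℕ, t.Coprime (p ^ n) → ∃ g, g * z = z ^ t * g := by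
    intro t ht
    set u : (ZMod (p ^ n))ˣ := ZMod.unitOfCoprime t ht with hu
    set i₁ : Fin k := ⟨1, by omega⟩ with hi₁
    have h01 : (0 : Fin k) ≠ i₁ := by simp [Fin.ext_iff, hi₁]
    have hK1 : K ≠ i₁ := by simp [Fin.ext_iff, hKdef, hi₁]; omega
    set dv : Fin k → ZMod (p ^ n) :=
      Function.update (Function.update (fun _ => (1 : ZMod (p ^ n))) 0 ↑u) i₁ ↑u⁻¹ with hdv
    have hdv0 : dv 0 = ↑u := by
      rw [hdv, Function.update_of_ne h01, Function.update_self]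
    have hdvK : dv K = 1 := by
      rw [hdv, Function.update_of_ne hK1, Function.update_of_ne (fun h => hK0 h.symm)]
    have hdet : (diagonal dv).det = 1 := by
      rw [det_diagonal, hdv]
      rw [Finset.prod_update_of_mem (Finset.mem_univ i₁)]
      rw [Finset.prod_update_of_mem
        (Finset.mem_sdiff.2 ⟨Finset.mem_univ _, by simp [h01]⟩)]
      simp
    refine ⟨⟨diagonal dv, hdet⟩, ?_⟩
    rw [hzpow]
    apply Subtype.ext
    show diagonal dv * transvection 0 K 1 = transvection 0 K ((t : ZMod (p ^ n))) * diagonal dv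
    have : (t : ZMod (p ^ n)) = ↑u := (ZMod.coe_unitOfCoprime t ht).symm
    rw [this]
    exact diag_mul_tv (by rw [hdv0, hdvK])
  -- apply the core bound
  have hcore := core _ hd hp hn φ hφunit z a b hzN hzM hrel hza hzb haa hab hbb hconj
  -- numerics
  have hcast : ((p : ℝ) ^ n - (p : ℝ) ^ (n - 1)) * (p : ℝ) ^ ((k - 2) * n)
      = ((Nat.totient (p ^ n) * (p ^ n) ^ (k - 2) : ℕ) : ℝ) := by
    rw [Nat.totient_prime_pow hp (by omega : 0 < n)]
    push_cast [Nat.cast_sub (by omega : 1 ≤ p)]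
    rw [mul_comm (k - 2) n, pow_mul]
    have hps : (p : ℝ) ^ n = (p : ℝ) ^ (n - 1) * p := by
      rw [← pow_succ]; congr 1; omega
    rw [hps]; ring
  rw [hcast]
  exact_mod_cast Nat.cast_le.2 hcore
end

section
/- For every k ≥ 1, the supremal measure of a measurable sum-free subset of the k-dimensional torus 𝕋^k = (ℝ/ℤ)^k equals 1/3; that is, sup{ μ(A) : A ⊆ 𝕋^k measurable and (A + A) ∩ A = ∅ } = 1/3, where μ is the normalized Haar (Lebesgue) measure on 𝕋^k. -/
open MeasureTheory
open scoped ENNReal Pointwise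

namespace TorusSumFree

section Discrete
open Finset
variable {G : Type*} [AddCommGroup G] [Fintype G] [DecidableEq G]

lemma sumfree_aux_full (E : Finset G) (hgen : AddSubgroup.closure (E : Set G) = ⊤)
    (S : Finset G) (hS : S.Nonempty) (hinv : ∀ e ∈ E, ∀ s ∈ S, s + e ∈ S) :
    S = Finset.univ := by
  have himg : ∀ e ∈ E, S.image (· + e) = S := by
    intro e he
    apply Finset.eq_of_subset_of_card_le
    · intro x hx
      simp only [Finset.mem_image] at hx
      obtain ⟨s, hs, rfl⟩ := hx
      exact hinv e he s hs
    · rw [Finset.card_image_of_injective _ (add_left_injective e)]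
  set St : AddSubgroup G :=
    { carrier := {h | S.image (· + h) = S}
      zero_mem' := by
        show S.image (· + 0) = S
        simp only [add_zero]
        exact Finset.image_id
      add_mem' := by
        intro a b ha hb
        simp only [Set.mem_setOf_eq] at *
        have : S.image (· + (a + b)) = (S.image (· + a)).image (· + b) := by
          rw [Finset.image_image]
          congr 1
          ext x
          simp [add_assoc]
        rw [this, ha, hb]
      neg_mem' := by
        intro a ha
        simp only [Set.mem_setOf_eq] at *
        conv_lhs => rw [← ha]
        rw [Finset.image_image]
        simp } with hSt
  have hEsub : (E : Set G) ⊆ (St : Set G) := fun e he => himg e (by exact_mod_cast he)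
  have htop : ∀ g : G, S.image (· + g) = S := by
    intro g
    have hg : g ∈ AddSubgroup.closure (E : Set G) := by rw [hgen]; trivial
    exact (AddSubgroup.closure_le St).2 hEsub hg
  obtain ⟨s₀, hs₀⟩ := hS
  apply Finset.eq_univ_of_forall
  intro g
  rw [← htop (g - s₀)]
  exact Finset.mem_image.2 ⟨s₀, hs₀, by abel⟩

lemma card_add_add_smooth (E : Finset G) (h0E : (0:G) ∈ E)
    (hgen : AddSubgroup.closure (E : Set G) = ⊤) :
    ∀ n (T S : Finset G), T.card ≤ n → S.Nonempty → (0:G) ∈ T →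
      min (Fintype.card G) (S.card + T.card) ≤ (S + T + E).card := by
  intro n
  induction n with
  | zero => intro T S hT hS h0T; exact absurd (Finset.card_pos.2 ⟨0, h0T⟩) (by omega)
  | succ n ih =>
    intro T S hTcard hS h0T
    have hSTE : S + E ⊆ S + T + E := by
      intro y hy
      rw [Finset.mem_add] at hy
      obtain ⟨s, hs, e, he, rfl⟩ := hy
      have : s + 0 + e ∈ S + T + E :=
        Finset.add_mem_add (Finset.add_mem_add hs h0T) he
      simpa using this
    by_cases hstuck : ∀ s ∈ S, ∀ t ∈ T, s + t ∈ S
    · -- stuck case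
      have himgT : ∀ t ∈ T, S.image (· + t) = S := by
        intro t ht
        apply Finset.eq_of_subset_of_card_le
        · intro x hx
          simp only [Finset.mem_image] at hx
          obtain ⟨s, hs, rfl⟩ := hx
          exact hstuck s hs t ht
        · rw [Finset.card_image_of_injective _ (add_left_injective t)]
      by_cases hSE : ∀ e ∈ E, ∀ s ∈ S, s + e ∈ S
      · have hSuniv := sumfree_aux_full E hgen S hS hSE
        have hsub : S ⊆ S + T + E := by
          intro s hs
          have : s + 0 + 0 ∈ S + T + E :=
            Finset.add_mem_add (Finset.add_mem_add hs h0T) h0E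
          simpa using this
        calc min (Fintype.card G) (S.card + T.card) ≤ Fintype.card G := min_le_left _ _
          _ = S.card := by rw [hSuniv, Finset.card_univ]
          _ ≤ _ := Finset.card_le_card hsub
      · push_neg at hSE
        obtain ⟨e₀, he₀, s₁, hs₁, hx⟩ := hSE
        set x := s₁ + e₀ with hxdef
        have hmem : ∀ t ∈ T, x + t ∈ (S + E) \ S := by
          intro t ht
          rw [Finset.mem_sdiff]
          refine ⟨?_, ?_⟩
          · have : (s₁ + t) + e₀ ∈ S + E :=
              Finset.add_mem_add (hstuck s₁ hs₁ t ht) he₀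
            convert this using 1
            rw [hxdef]; abel
          · intro hcon
            apply hx
            have hmem2 : x + t ∈ S.image (· + t) := by rw [himgT t ht]; exact hcon
            simp only [Finset.mem_image] at hmem2
            obtain ⟨s, hs, heq⟩ := hmem2
            have hxs : s = x := add_right_cancel heq
            rwa [← hxs]
        have himg : (T.image (x + ·)) ⊆ (S + E) \ S := by
          intro y hy
          simp only [Finset.mem_image] at hy
          obtain ⟨t, ht, rfl⟩ := hy
          exact hmem t ht
        have hSsub : S ⊆ S + E := by
          intro s hs
          have : s + 0 ∈ S + E := Finset.add_mem_add hs h0E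
          simpa using this
        have hcard1 : ((S + E) \ S).card + S.card = (S + E).card :=
          Finset.card_sdiff_add_card_eq_card hSsub
        have hcard2 : T.card ≤ ((S + E) \ S).card := by
          calc T.card = (T.image (x + ·)).card :=
                (Finset.card_image_of_injective _ (add_right_injective x)).symm
            _ ≤ _ := Finset.card_le_card himg
        calc min (Fintype.card G) (S.card + T.card)
            ≤ S.card + T.card := min_le_right _ _
          _ ≤ (S + E).card := by omega
          _ ≤ (S + T + E).card := Finset.card_le_card hSTE
    · -- non-stuck: Dyson transform
      push_neg at hstuck
      obtain ⟨s₀, hs₀, t₁, ht₁, hs₀t₁⟩ := hstuck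
      set S' : Finset G := S ∪ T.image (s₀ + ·) with hS'def
      set T' : Finset G := T.filter (fun t => s₀ + t ∈ S) with hT'def
      have h0T' : (0:G) ∈ T' := by
        rw [hT'def, Finset.mem_filter]
        exact ⟨h0T, by simpa using hs₀⟩
      have hT'card : T'.card < T.card := by
        apply Finset.card_lt_card
        rw [Finset.ssubset_iff_of_subset (Finset.filter_subset _ _)]
        exact ⟨t₁, ht₁, by simp [hT'def, hs₀t₁]⟩
      -- the image of the bad set is (T.image (s₀ + ·)) \ S
      have himgbad : (T.filter (fun t => s₀ + t ∉ S)).image (s₀ + ·)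
          = (T.image (s₀ + ·)) \ S := by
        ext y
        simp only [Finset.mem_image, Finset.mem_sdiff, Finset.mem_filter]
        constructor
        · rintro ⟨t, ⟨ht, hnot⟩, rfl⟩
          exact ⟨⟨t, ht, rfl⟩, hnot⟩
        · rintro ⟨⟨t, ht, rfl⟩, hnot⟩
          exact ⟨t, ⟨ht, hnot⟩, rfl⟩
      have hcards : S.card + T.card ≤ S'.card + T'.card := by
        have h1 : ((T.image (s₀ + ·)) \ S).card + S.card = S'.card := by
          rw [hS'def, Finset.union_comm]
          exact Finset.card_sdiff_add_card _ _
        have h2 : T'.card + (T.filter (fun t => s₀ + t ∉ S)).card = T.card :=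
          Finset.card_filter_add_card_filter_not _
        have h3 : (T.filter (fun t => s₀ + t ∉ S)).card = ((T.image (s₀ + ·)) \ S).card := by
          rw [← himgbad, Finset.card_image_of_injective _ (add_right_injective s₀)]
        omega
      have hsum : S' + T' ⊆ S + T := by
        intro y hy
        rw [Finset.mem_add] at hy
        obtain ⟨a, ha, t, ht, rfl⟩ := hy
        rw [hS'def, Finset.mem_union] at ha
        rw [hT'def, Finset.mem_filter] at ht
        rcases ha with ha | ha
        · exact Finset.add_mem_add ha ht.1
        · simp only [Finset.mem_image] at ha
          obtain ⟨u, hu, rfl⟩ := ha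
          have : (s₀ + t) + u ∈ S + T := Finset.add_mem_add ht.2 hu
          convert this using 1
          abel
      have hS'ne : S'.Nonempty := ⟨s₀, by rw [hS'def]; exact Finset.mem_union_left _ hs₀⟩
      have := ih T' S' (by omega) hS'ne h0T'
      calc min (Fintype.card G) (S.card + T.card)
          ≤ min (Fintype.card G) (S'.card + T'.card) := min_le_min le_rfl (by omega)
        _ ≤ (S' + T' + E).card := this
        _ ≤ (S + T + E).card :=
            Finset.card_le_card (Finset.add_subset_add_right hsum)

end Discrete


local notation "𝕊" => AddCircle (1:ℝ)

noncomputable section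

def arc (n : ℕ) (j : ZMod n) : Set 𝕊 :=
  (fun r : ℝ => (r : 𝕊)) '' Set.Icc ((j.val : ℝ)/n) (((j.val : ℝ)+1)/n)

lemma coe_add_int (r : ℝ) (m : ℤ) : ((r + m : ℝ) : 𝕊) = (r : 𝕊) := by
  have h : ((m : ℝ) : 𝕊) = 0 := by simp [AddCircle.coe_eq_zero_iff]
  show (r : 𝕊) + ((m : ℝ) : 𝕊) = (r : 𝕊)
  rw [h, add_zero]

lemma norm_coe_le (x : ℝ) : ‖(x : 𝕊)‖ ≤ |x| := by
  simpa using QuotientAddGroup.norm_mk_le_norm (S := AddSubgroup.zmultiples (1:ℝ)) (m := x)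

variable (n : ℕ) [NeZero n]

lemma npos : 0 < (n:ℝ) := by
  have := Nat.pos_of_ne_zero (NeZero.ne n); exact_mod_cast this

lemma mod_cast_real (m : ℕ) : ((m % n : ℕ) : ℝ) = (m:ℝ) - n * (m / n : ℕ) := by
  have h := Nat.mod_add_div m n
  have h2 : ((m % n : ℕ) : ℝ) + (n:ℝ) * ((m / n : ℕ) : ℝ) = (m:ℝ) := by exact_mod_cast h
  push_cast at h2
  linarith

lemma mem_arc_natCast (m : ℕ) {w : ℝ}
    (hw : w ∈ Set.Icc ((m:ℝ)/n) (((m:ℝ)+1)/n)) : (w : 𝕊) ∈ arc n (m : ZMod n) := by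
  have hn : 0 < (n:ℝ) := npos n
  have hval : ((m : ZMod n)).val = m % n := ZMod.val_natCast n m
  set q : ℕ := m / n with hq
  have h1 : ((m % n : ℕ) : ℝ) = (m:ℝ) - n * q := mod_cast_real n m
  have hw1 : (m:ℝ) ≤ w * n := (div_le_iff₀ hn).1 hw.1
  have hw2 : w * n ≤ (m:ℝ) + 1 := (le_div_iff₀ hn).1 hw.2
  refine ⟨w - q, ⟨?_, ?_⟩, ?_⟩
  · rw [hval, h1, div_le_iff₀ hn]
    nlinarith
  · rw [hval, h1, le_div_iff₀ hn]
    nlinarith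
  · have h := coe_add_int (w - (q:ℝ)) (q:ℕ)
    have h2 : w - (q:ℝ) + (((q:ℕ):ℤ):ℝ) = w := by push_cast; ring
    rw [h2] at h
    exact h.symm

lemma arc_nonempty (j : ZMod n) : (arc n j).Nonempty := by
  have hn : 0 < (n:ℝ) := npos n
  exact ⟨(((j.val : ℝ)/n : ℝ) : 𝕊), (j.val : ℝ)/n, ⟨le_rfl, by gcongr <;> linarith⟩, rfl⟩

lemma arc_subset_closedBall {j : ZMod n} {x : 𝕊} (hx : x ∈ arc n j) :
    arc n j ⊆ Metric.closedBall x (1/n) := by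
  have hsplit : ((j.val:ℝ)+1)/n = (j.val:ℝ)/n + 1/n := by ring
  obtain ⟨r, hr, rfl⟩ := hx
  rintro y ⟨w, hw, rfl⟩
  rw [Metric.mem_closedBall, dist_eq_norm]
  have heq : ((w : ℝ) : 𝕊) - (r : 𝕊) = ((w - r : ℝ) : 𝕊) := rfl
  rw [heq]
  refine (norm_coe_le _).trans ?_
  rw [abs_le]
  constructor <;> [skip; skip] <;>
    · have h1 := hr.1; have h2 := hr.2; have h3 := hw.1; have h4 := hw.2
      rw [hsplit] at *
      linarith

lemma exists_arc_mem (x : 𝕊) : ∃ j : ZMod n, x ∈ arc n j := by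
  obtain ⟨t, rfl⟩ : ∃ t : ℝ, (t : 𝕊) = x := Quot.exists_rep x
  have hn : 0 < (n:ℝ) := npos n
  set r : ℝ := Int.fract t with hr
  have hxr : (r : 𝕊) = (t : 𝕊) := by
    have h := coe_add_int r ⌊t⌋
    have h2 : r + ((⌊t⌋:ℤ):ℝ) = t := by rw [hr]; unfold Int.fract; push_cast; ring
    rw [h2] at h
    exact h.symm
  have hr0 : 0 ≤ r := Int.fract_nonneg t
  have hr1 : r < 1 := Int.fract_lt_one t
  set j₀ : ℕ := ⌊(n:ℝ) * r⌋.toNat with hj₀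
  have hnn : (0:ℤ) ≤ ⌊(n:ℝ) * r⌋ := Int.floor_nonneg.2 (by positivity)
  have h1 : ((j₀:ℕ):ℤ) = ⌊(n:ℝ)*r⌋ := Int.toNat_of_nonneg hnn
  have hfl1 : (j₀ : ℝ) ≤ (n:ℝ) * r := by
    have h2 : (((j₀:ℕ):ℤ):ℝ) ≤ (n:ℝ)*r := by rw [h1]; exact Int.floor_le _
    exact_mod_cast h2
  have hfl2 : (n:ℝ) * r < (j₀:ℝ) + 1 := by
    have h2 : (n:ℝ)*r < (((j₀:ℕ):ℤ):ℝ) + 1 := by rw [h1]; exact Int.lt_floor_add_one _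
    exact_mod_cast h2
  refine ⟨(j₀ : ZMod n), ?_⟩
  rw [← hxr]
  apply mem_arc_natCast
  constructor
  · rw [div_le_iff₀ hn]; nlinarith
  · rw [le_div_iff₀ hn]; nlinarith

lemma volume_arc_le (j : ZMod n) : volume (arc n j) ≤ ENNReal.ofReal (1/n) := by
  have hn : 0 < (n:ℝ) := npos n
  have hsplit : ((j.val:ℝ)+2⁻¹)/n = (j.val:ℝ)/n + 2⁻¹/n := by ring
  have hsplit2 : ((j.val:ℝ)+1)/n = (j.val:ℝ)/n + 2⁻¹/n + 2⁻¹/n := by ring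
  have h2 : (1:ℝ)/(2*n) = 2⁻¹/n := by ring
  have hsub : arc n j ⊆ Metric.closedBall (((((j.val:ℝ) + 2⁻¹)/n : ℝ)) : 𝕊) (1/(2*n)) := by
    rintro y ⟨w, hw, rfl⟩
    rw [Metric.mem_closedBall, dist_eq_norm]
    have heq : ((w : ℝ) : 𝕊) - ((((j.val:ℝ) + 2⁻¹)/n : ℝ) : 𝕊)
        = ((w - ((j.val:ℝ) + 2⁻¹)/n : ℝ) : 𝕊) := rfl
    rw [heq]
    refine (norm_coe_le _).trans ?_
    rw [abs_le, h2, hsplit]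
    have h3 := hw.1; have h4 := hw.2
    rw [hsplit2] at h4
    constructor <;> linarith
  calc volume (arc n j) ≤ _ := measure_mono hsub
    _ = ENNReal.ofReal (min 1 (2 * (1/(2*n)))) := AddCircle.volume_closedBall 1 _
    _ ≤ ENNReal.ofReal (1/n) := by
        apply ENNReal.ofReal_le_ofReal
        apply min_le_of_right_le
        rw [mul_one_div]
        apply le_of_eq
        field_simp

lemma arc_add_cover {a b u : ZMod n} (hu : u = a + b ∨ u = a + b + 1) :
    arc n u ⊆ arc n a + arc n b := by
  have hn : 0 < (n:ℝ) := npos n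
  have hcast : ∀ z : ZMod n, ((z.val : ℕ) : ZMod n) = z := fun z => ZMod.natCast_rightInverse z
  obtain ⟨c, hc1, hcu⟩ : ∃ c : ℕ, c ≤ 1 ∧ ((a.val + b.val + c : ℕ) : ZMod n) = u := by
    rcases hu with rfl | rfl
    · exact ⟨0, zero_le_one, by push_cast [hcast]; ring⟩
    · exact ⟨1, le_rfl, by push_cast [hcast]; ring⟩
  set m : ℕ := a.val + b.val + c with hm
  have hmr : (m:ℝ) = (a.val:ℝ) + (b.val:ℝ) + c := by rw [hm]; push_cast; ring
  have hval : u.val = m % n := by rw [← hcu, ZMod.val_natCast]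
  set q : ℕ := m / n with hq
  have h1 : ((m % n : ℕ) : ℝ) = (m:ℝ) - n * q := mod_cast_real n m
  rintro x ⟨w, hw, rfl⟩
  rw [hval, h1] at hw
  set w' : ℝ := w + q with hw'
  have hxw : ((w : ℝ) : 𝕊) = ((w' : ℝ) : 𝕊) := (coe_add_int w q).symm
  have hw'mem : (m:ℝ)/n ≤ w' ∧ w' ≤ ((m:ℝ)+1)/n := by
    have h3 := hw.1; have h4 := hw.2
    rw [div_le_iff₀ hn] at h3 ⊢
    rw [le_div_iff₀ hn] at h4 ⊢
    constructor <;> nlinarith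
  set d : ℝ := w' - (a.val:ℝ)/n - (b.val:ℝ)/n with hd
  have hmr1 : (m:ℝ)/n = (a.val:ℝ)/n + (b.val:ℝ)/n + (c:ℝ)/n := by rw [hmr]; ring
  have hmr2 : ((m:ℝ)+1)/n = (a.val:ℝ)/n + (b.val:ℝ)/n + ((c:ℝ)+1)/n := by rw [hmr]; ring
  have hd0 : 0 ≤ d := by
    have h := hw'mem.1
    rw [hmr1] at h
    have hc0 : (0:ℝ) ≤ (c:ℝ)/n := by positivity
    rw [hd]
    linarith
  have hd2 : d ≤ ((c:ℝ)+1)/n := by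
    have h := hw'mem.2
    rw [hmr2] at h
    rw [hd]
    linarith
  have hdle : d ≤ 2/n := by
    have hc : (c:ℝ) ≤ 1 := by exact_mod_cast hc1
    have h : ((c:ℝ)+1)/n ≤ 2/n := by
      rw [div_le_div_iff₀ hn hn]
      nlinarith
    linarith
  clear_value w' d
  obtain ⟨e, he0, he1, hf0, hf1⟩ : ∃ e : ℝ, 0 ≤ e ∧ e ≤ 1/n ∧ 0 ≤ d - e ∧ d - e ≤ 1/n := by
    refine ⟨min d (1/n), le_min hd0 (by positivity), min_le_right _ _,
      sub_nonneg.2 (min_le_left _ _), ?_⟩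
    rcases min_cases d (1/n) with ⟨hmin, _⟩ | ⟨hmin, _⟩
    · rw [hmin, sub_self]; positivity
    · rw [hmin]
      have h : (2:ℝ)/n = 1/n + 1/n := by ring
      linarith
  have hsum : w' = ((a.val:ℝ)/n + e) + ((b.val:ℝ)/n + (d - e)) := by rw [hd]; ring
  have hmem1 : ((a.val:ℝ)/n + e) ∈ Set.Icc ((a.val:ℝ)/n) (((a.val:ℝ)+1)/n) := by
    constructor
    · linarith
    · have : ((a.val:ℝ)+1)/n = (a.val:ℝ)/n + 1/n := by ring
      linarith
  have hmem2 : ((b.val:ℝ)/n + (d - e)) ∈ Set.Icc ((b.val:ℝ)/n) (((b.val:ℝ)+1)/n) := by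
    constructor
    · linarith
    · have : ((b.val:ℝ)+1)/n = (b.val:ℝ)/n + 1/n := by ring
      linarith
  show ((w : ℝ) : 𝕊) ∈ arc n a + arc n b
  rw [hxw, hsum]
  exact Set.add_mem_add (Set.mem_image_of_mem _ hmem1) (Set.mem_image_of_mem _ hmem2)

omit [NeZero n] in
lemma isCompact_arc (j : ZMod n) : IsCompact (arc n j) :=
  isCompact_Icc.image (AddCircle.continuous_mk' 1)

lemma measurableSet_arc (j : ZMod n) : MeasurableSet (arc n j) :=
  (isCompact_arc n j).isClosed.measurableSet

variable {k : ℕ}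

def cell (n : ℕ) [NeZero n] (s : Fin k → ZMod n) : Set (Fin k → 𝕊) :=
  Set.univ.pi fun i => arc n (s i)

lemma cell_nonempty (s : Fin k → ZMod n) : (cell n s).Nonempty :=
  ⟨fun i => (arc_nonempty n (s i)).choose, fun i _ => (arc_nonempty n (s i)).choose_spec⟩

lemma measurableSet_cell (s : Fin k → ZMod n) : MeasurableSet (cell n s) :=
  MeasurableSet.univ_pi fun i => measurableSet_arc n (s i)

lemma volume_cell_le (s : Fin k → ZMod n) :
    volume (cell n s) ≤ ENNReal.ofReal (1/n) ^ k := by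
  rw [cell, volume_pi_pi]
  calc ∏ i, volume (arc n (s i)) ≤ ∏ _i : Fin k, ENNReal.ofReal (1/n) :=
        Finset.prod_le_prod' fun i _ => volume_arc_le n (s i)
    _ = _ := by simp

lemma cell_subset_closedBall {s : Fin k → ZMod n} {x : Fin k → 𝕊} (hx : x ∈ cell n s) :
    cell n s ⊆ Metric.closedBall x (1/n) := by
  intro y hy
  rw [Metric.mem_closedBall]
  have hnn : (0:ℝ) ≤ 1/n := by positivity
  rw [dist_pi_le_iff hnn]
  intro i
  have h := arc_subset_closedBall n (hx i (Set.mem_univ i)) (hy i (Set.mem_univ i))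
  rwa [Metric.mem_closedBall] at h

lemma exists_cell_mem (x : Fin k → 𝕊) : ∃ s : Fin k → ZMod n, x ∈ cell n s :=
  ⟨fun i => (exists_arc_mem n (x i)).choose, fun i _ => (exists_arc_mem n (x i)).choose_spec⟩

lemma cell_add_cover {s t e : Fin k → ZMod n} (he : ∀ i, e i = 0 ∨ e i = 1) :
    cell n (s + t + e) ⊆ cell n s + cell n t := by
  intro x hx
  have h : ∀ i, ∃ y z : 𝕊, y ∈ arc n (s i) ∧ z ∈ arc n (t i) ∧ y + z = x i := by
    intro i
    have hu : (s + t + e) i = s i + t i ∨ (s + t + e) i = s i + t i + 1 := by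
      rcases he i with h0 | h1
      · left; simp [h0]
      · right; simp [h1]
    obtain ⟨y, hy, z, hz, hyz⟩ := Set.mem_add.1 (arc_add_cover n hu (hx i (Set.mem_univ i)))
    exact ⟨y, z, hy, hz, hyz⟩
  choose y z hy hz hyz using h
  exact Set.mem_add.2 ⟨y, fun i _ => hy i, z, fun i _ => hz i, funext hyz⟩

open Finset in
lemma scale_bound (U : Set (Fin k → 𝕊)) (hsf : (U + U) ∩ U = ∅)
    (Sn : Finset (Fin k → ZMod n)) (hsub : ∀ s ∈ Sn, cell n s ⊆ U) :
    volume (⋃ s ∈ Sn, cell n s) ≤ 1/3 := by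
  classical
  rcases Sn.eq_empty_or_nonempty with rfl | ⟨s₀, hs₀⟩
  · simp
  -- the smoothing set E
  set E : Finset (Fin k → ZMod n) :=
    Finset.univ.filter (fun e : Fin k → ZMod n => ∀ i, e i = 0 ∨ e i = 1) with hE
  have h0E : (0 : Fin k → ZMod n) ∈ E := by
    rw [hE, Finset.mem_filter]
    exact ⟨Finset.mem_univ _, fun i => Or.inl rfl⟩
  have hgen : AddSubgroup.closure (E : Set (Fin k → ZMod n)) = ⊤ := by
    rw [eq_top_iff]
    intro g _
    have hg : g = ∑ i, Pi.single i (g i) := (Finset.univ_sum_single g).symm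
    rw [hg]
    apply AddSubgroup.sum_mem
    intro i _
    have h1 : Pi.single i (g i) = (g i).val • (Pi.single i 1 : Fin k → ZMod n) := by
      ext j
      by_cases hji : j = i
      · subst hji
        simp only [Pi.single_eq_same, Pi.smul_apply, smul_eq_mul, nsmul_eq_mul, mul_one]
        exact (ZMod.natCast_rightInverse (g j)).symm
      · simp [Pi.single_eq_of_ne hji]
    rw [h1]
    refine AddSubgroup.nsmul_mem _ (AddSubgroup.subset_closure ?_) _
    show Pi.single i (1 : ZMod n) ∈ E
    rw [hE, Finset.mem_filter]
    refine ⟨Finset.mem_univ _, fun j => ?_⟩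
    by_cases hji : j = i
    · subst hji; right; simp
    · left; simp [Pi.single_eq_of_ne hji]
  -- disjointness of Sn and Sn + Sn + E
  have hdis : ∀ u ∈ Sn + Sn + E, u ∉ Sn := by
    intro u hu hcon
    rw [Finset.mem_add] at hu
    obtain ⟨v, hv, e, he, rfl⟩ := hu
    rw [Finset.mem_add] at hv
    obtain ⟨s, hs, t, ht, rfl⟩ := hv
    have he' : ∀ i, e i = 0 ∨ e i = 1 := by
      rw [hE, Finset.mem_filter] at he
      exact he.2
    obtain ⟨x₀, hx₀⟩ := cell_nonempty n (s + t + e)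
    have hx₀U : x₀ ∈ U := hsub _ hcon hx₀
    obtain ⟨y, hy, z, hz, hyz⟩ := Set.mem_add.1 (cell_add_cover n he' hx₀)
    have : x₀ ∈ (U + U) ∩ U := by
      refine ⟨?_, hx₀U⟩
      rw [← hyz]
      exact Set.add_mem_add (hsub s hs hy) (hsub t ht hz)
    rw [hsf] at this
    exact this
  -- cardinality bound via the Dyson lemma
  have hcard3 : 3 * Sn.card ≤ n ^ k := by
    set T : Finset (Fin k → ZMod n) := Sn + {-s₀} with hT
    have h0T : (0 : Fin k → ZMod n) ∈ T := by
      rw [hT, Finset.mem_add]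
      exact ⟨s₀, hs₀, -s₀, Finset.mem_singleton_self _, add_neg_cancel _⟩
    have hTcard : T.card = Sn.card := by
      rw [hT, Finset.card_add_singleton]
    have hrearr : Sn + T + E = Sn + Sn + E + {-s₀} := by
      rw [hT]; abel_nf
    have hcardeq : (Sn + T + E).card = (Sn + Sn + E).card := by
      rw [hrearr, Finset.card_add_singleton]
    have hdyson := card_add_add_smooth E h0E hgen T.card T Sn le_rfl ⟨s₀, hs₀⟩ h0T
    have hsubdis : Sn + Sn + E ⊆ Finset.univ \ Sn := by
      intro u hu
      rw [Finset.mem_sdiff]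
      exact ⟨Finset.mem_univ _, hdis u hu⟩
    have hle : (Sn + Sn + E).card ≤ Fintype.card (Fin k → ZMod n) - Sn.card := by
      calc (Sn + Sn + E).card ≤ (Finset.univ \ Sn).card := Finset.card_le_card hsubdis
        _ = _ := by rw [Finset.card_sdiff_of_subset (Finset.subset_univ _), Finset.card_univ]
    have hG : Fintype.card (Fin k → ZMod n) = n ^ k := by
      rw [Fintype.card_fun, ZMod.card, Fintype.card_fin]
    have hpos : 0 < Sn.card := Finset.card_pos.2 ⟨s₀, hs₀⟩
    rw [hcardeq] at hdyson
    rw [hG] at hdyson hle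
    rw [hTcard] at hdyson
    have hcle : Sn.card ≤ n ^ k := by
      have h := Finset.card_le_univ Sn
      rwa [hG] at h
    rcases le_total (n ^ k) (Sn.card + Sn.card) with hmm | hmm
    · rw [min_eq_left hmm] at hdyson; omega
    · rw [min_eq_right hmm] at hdyson; omega
  -- measure bound
  have hof : ENNReal.ofReal (1/(n:ℝ)) = ((n : ℝ≥0∞))⁻¹ := by
    rw [one_div, ENNReal.ofReal_inv_of_pos (npos n), ENNReal.ofReal_natCast]
  calc volume (⋃ s ∈ Sn, cell n s) ≤ ∑ s ∈ Sn, volume (cell n s) :=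
        measure_biUnion_finset_le _ _
    _ ≤ ∑ _s ∈ Sn, ENNReal.ofReal (1/n) ^ k :=
        Finset.sum_le_sum fun s _ => volume_cell_le n s
    _ = Sn.card * ((n : ℝ≥0∞) ^ k)⁻¹ := by
        rw [Finset.sum_const, nsmul_eq_mul, hof, ENNReal.inv_pow]
    _ ≤ 1/3 := by
        have hne : ((n : ℝ≥0∞) ^ k) ≠ 0 := by
          apply pow_ne_zero
          exact_mod_cast Nat.cast_ne_zero.2 (NeZero.ne n)
        have hnt : ((n : ℝ≥0∞) ^ k) ≠ ⊤ := by
          apply ENNReal.pow_ne_top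
          exact ENNReal.natCast_ne_top n
        rw [ENNReal.le_div_iff_mul_le (Or.inl (by norm_num)) (Or.inl (by norm_num))]
        calc Sn.card * ((n : ℝ≥0∞) ^ k)⁻¹ * 3 = (3 * Sn.card) * ((n : ℝ≥0∞) ^ k)⁻¹ := by ring
          _ ≤ (n : ℝ≥0∞) ^ k * ((n : ℝ≥0∞) ^ k)⁻¹ := by
              apply mul_le_mul_left
              have h : ((3 * Sn.card : ℕ) : ℝ≥0∞) ≤ ((n ^ k : ℕ) : ℝ≥0∞) := Nat.cast_le.2 hcard3
              push_cast at h
              exact h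
          _ = 1 := ENNReal.mul_inv_cancel hne hnt

lemma open_le_third {k : ℕ} (U : Set (Fin k → 𝕊)) (hUo : IsOpen U)
    (hsf : (U + U) ∩ U = ∅) : volume U ≤ 1/3 := by
  classical
  set Sn : ∀ _m : ℕ, Finset (Fin k → ZMod (_m+1)) := fun m =>
    Finset.univ.filter (fun s => cell (m+1) s ⊆ U) with hSn
  set F : ℕ → Set (Fin k → 𝕊) := fun m => ⋃ s ∈ Sn m, cell (m+1) s with hF
  have hFle : ∀ m, volume (F m) ≤ 1/3 := fun m =>
    scale_bound (m+1) U hsf (Sn m) (fun s hs => (Finset.mem_filter.1 hs).2)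
  have hmem : ∀ x ∈ U, ∃ N : ℕ, ∀ m, N ≤ m → x ∈ F m := by
    intro x hx
    obtain ⟨r, hr0, hrU⟩ := Metric.isOpen_iff.1 hUo x hx
    obtain ⟨N, hN⟩ := exists_nat_one_div_lt hr0
    refine ⟨N, fun m hm => ?_⟩
    obtain ⟨s, hs⟩ := exists_cell_mem (m+1) x
    have hsU : cell (m+1) s ⊆ U := by
      refine (cell_subset_closedBall (m+1) hs).trans ?_
      intro y hy
      apply hrU
      rw [Metric.mem_ball]
      rw [Metric.mem_closedBall] at hy
      have h1 : (1:ℝ)/((m:ℝ)+1) ≤ 1/((N:ℝ)+1) := by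
        apply one_div_le_one_div_of_le
        · positivity
        · exact_mod_cast Nat.succ_le_succ hm
      have hy' : dist y x ≤ 1/((m:ℝ)+1) := by exact_mod_cast hy
      calc dist y x ≤ 1/((m:ℝ)+1) := hy'
        _ ≤ 1/((N:ℝ)+1) := by exact_mod_cast h1
        _ < r := hN
    exact Set.mem_biUnion (Finset.mem_filter.2 ⟨Finset.mem_univ _, hsU⟩) hs
  set Gs : ℕ → Set (Fin k → 𝕊) := fun N => ⋂ m : ℕ, F (N + m) with hGs
  have hGmono : Monotone Gs := by
    intro N N' hNN'
    intro x hx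
    rw [hGs, Set.mem_iInter]
    intro m
    have h := Set.mem_iInter.1 hx (N' - N + m)
    have : N + (N' - N + m) = N' + m := by omega
    rwa [this] at h
  have hsubU : U ⊆ ⋃ N, Gs N := by
    intro x hx
    obtain ⟨N, hN⟩ := hmem x hx
    exact Set.mem_iUnion.2 ⟨N, Set.mem_iInter.2 fun m => hN (N + m) (Nat.le_add_right _ _)⟩
  calc volume U ≤ volume (⋃ N, Gs N) := measure_mono hsubU
    _ = ⨆ N, volume (Gs N) := Directed.measure_iUnion (hGmono.directed_le)
    _ ≤ 1/3 := by
        apply iSup_le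
        intro N
        refine le_trans (measure_mono ?_) (hFle N)
        have h := Set.iInter_subset (fun m => F (N + m)) 0
        simpa using h

lemma meas_le_third {k : ℕ} (A : Set (Fin k → 𝕊)) (hA : MeasurableSet A)
    (hsf : (A + A) ∩ A = ∅) : volume A ≤ 1/3 := by
  haveI : IsProbabilityMeasure (volume : Measure 𝕊) :=
    ⟨by rw [AddCircle.measure_univ]; norm_num⟩
  apply ENNReal.le_of_forall_pos_le_add
  intro ε hε _
  have hεne : (ε : ℝ≥0∞) ≠ 0 := by exact_mod_cast hε.ne'
  obtain ⟨K, hKA, hKcomp, hKdiff⟩ :=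
    hA.exists_isCompact_diff_lt (μ := volume) (measure_ne_top _ _) hεne
  have hKthird : volume K ≤ 1/3 := by
    rcases K.eq_empty_or_nonempty with rfl | hKne
    · simp
    have hLcomp : IsCompact (K + K) := hKcomp.add hKcomp
    have hdisj : Disjoint K (K + K) := by
      rw [Set.disjoint_left]
      intro x hxK hxKK
      have : x ∈ (A + A) ∩ A := ⟨Set.add_subset_add hKA hKA hxKK, hKA hxK⟩
      rw [hsf] at this
      exact this
    obtain ⟨δ, hδ, hthick⟩ := hdisj.exists_thickenings hKcomp hLcomp.isClosed
    set U : Set (Fin k → 𝕊) := Metric.thickening (δ/2) K with hU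
    have hUsf : (U + U) ∩ U = ∅ := by
      rw [Set.eq_empty_iff_forall_notMem]
      rintro x ⟨hxUU, hxU⟩
      obtain ⟨y, hy, z, hz, rfl⟩ := Set.mem_add.1 hxUU
      obtain ⟨ky, hky, hdy⟩ := Metric.mem_thickening_iff.1 hy
      obtain ⟨kz, hkz, hdz⟩ := Metric.mem_thickening_iff.1 hz
      have h1 : y + z ∈ Metric.thickening δ (K + K) := by
        rw [Metric.mem_thickening_iff]
        refine ⟨ky + kz, Set.add_mem_add hky hkz, ?_⟩
        calc dist (y + z) (ky + kz) ≤ dist y ky + dist z kz := dist_add_add_le _ _ _ _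
          _ < δ/2 + δ/2 := add_lt_add hdy hdz
          _ = δ := by ring
      have h2 : y + z ∈ Metric.thickening δ K :=
        Metric.thickening_mono (by linarith) K hxU
      exact Set.disjoint_left.1 hthick h2 h1
    have hKU : K ⊆ U := Metric.self_subset_thickening (by positivity) K
    calc volume K ≤ volume U := measure_mono hKU
      _ ≤ 1/3 := open_le_third U Metric.isOpen_thickening hUsf
  calc volume A = volume (A \ K ∪ K) := by rw [Set.diff_union_of_subset hKA]
    _ ≤ volume (A \ K) + volume K := measure_union_le _ _
    _ ≤ ε + 1/3 := add_le_add hKdiff.le hKthird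
    _ = 1/3 + ε := add_comm _ _

def Mset : Set 𝕊 := Metric.ball (((1:ℝ)/2 : ℝ) : 𝕊) (1/6)

lemma Mset_volume : volume Mset = 1/3 := by
  have h1 : volume Mset = volume (Metric.closedBall (((1:ℝ)/2 : ℝ) : 𝕊) (1/6)) :=
    (measure_congr AddCircle.closedBall_ae_eq_ball).symm
  rw [h1, AddCircle.volume_closedBall]
  have h2 : min (1:ℝ) (2 * (1/6)) = 1/3 := by norm_num
  rw [h2]
  rw [ENNReal.ofReal_div_of_pos (by norm_num)]
  norm_num

lemma Mset_sumfree {a b : 𝕊} (ha : a ∈ Mset) (hb : b ∈ Mset) : a + b ∉ Mset := by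
  set c : 𝕊 := (((1:ℝ)/2 : ℝ) : 𝕊) with hc
  rw [Mset, Metric.mem_ball, dist_eq_norm] at ha hb ⊢
  intro hab
  have hcc : c + c = 0 := by
    rw [hc]
    have h0 : (((1:ℝ)/2 : ℝ) : 𝕊) + (((1:ℝ)/2 : ℝ) : 𝕊) = (((1:ℝ)/2 + (1:ℝ)/2 : ℝ) : 𝕊) := rfl
    rw [h0]
    have h2 : (1:ℝ)/2 + 1/2 = 1 := by norm_num
    rw [h2]
    simp [AddCircle.coe_eq_zero_iff]
  have hnc : ‖c‖ = 1/2 := by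
    rw [hc]
    have h := AddCircle.norm_half_period_eq (p := (1:ℝ))
    rw [h]
    norm_num
  have hsum : a + b = (a - c) + (b - c) := by
    have h0 : (a - c) + (b - c) = a + b - (c + c) := by abel
    rw [h0, hcc, sub_zero]
  have hnab : ‖a + b‖ < 1/3 := by
    rw [hsum]
    calc ‖(a - c) + (b - c)‖ ≤ ‖a - c‖ + ‖b - c‖ := norm_add_le _ _
      _ < 1/6 + 1/6 := add_lt_add ha hb
      _ = 1/3 := by norm_num
  have hlow : ‖c‖ - ‖a + b‖ ≤ ‖a + b - c‖ := by
    have h := norm_sub_norm_le c (a + b)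
    have h2 : ‖c - (a + b)‖ = ‖a + b - c‖ := norm_sub_rev _ _
    linarith
  rw [hnc] at hlow
  linarith

lemma lower_bound {k : ℕ} (hk : 1 ≤ k) :
    ∃ A : Set (Fin k → 𝕊), MeasurableSet A ∧ (A + A) ∩ A = ∅ ∧ volume A = 1/3 := by
  haveI : IsProbabilityMeasure (volume : Measure 𝕊) :=
    ⟨by rw [AddCircle.measure_univ]; norm_num⟩
  set i₀ : Fin k := ⟨0, hk⟩ with hi₀
  refine ⟨(fun x : Fin k → 𝕊 => x i₀) ⁻¹' Mset, ?_, ?_, ?_⟩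
  · exact (measurable_pi_apply i₀) measurableSet_ball
  · rw [Set.eq_empty_iff_forall_notMem]
    rintro x ⟨hxadd, hxmem⟩
    obtain ⟨y, hy, z, hz, rfl⟩ := Set.mem_add.1 hxadd
    exact Mset_sumfree hy hz hxmem
  · have heq : (fun x : Fin k → 𝕊 => x i₀) ⁻¹' Mset
        = Set.univ.pi (fun i => if i = i₀ then Mset else Set.univ) := by
      ext z
      simp only [Set.mem_preimage, Set.mem_pi, Set.mem_univ, forall_true_left]
      constructor
      · intro h i
        by_cases hii : i = i₀
        · subst hii; simpa using h
        · simp [hii]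
      · intro h
        have := h i₀
        simpa using this
    rw [heq, volume_pi_pi]
    have hval : ∀ i : Fin k, volume (if i = i₀ then Mset else (Set.univ : Set 𝕊))
        = if i = i₀ then (1/3 : ℝ≥0∞) else 1 := by
      intro i
      by_cases hii : i = i₀
      · simp [hii, Mset_volume]
      · simp [hii]
    simp_rw [hval]
    rw [Finset.prod_ite_eq' Finset.univ i₀ (fun _ => (1/3 : ℝ≥0∞))]
    simp

end

end TorusSumFree


/-- The supremal measure of a measurable sum-free subset of the `k`-dimensional torus
`𝕋^k = (ℝ/ℤ)^k` equals `1/3`. -/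
theorem torus_sum_free_sup_measure (k : ℕ) (hk : 1 ≤ k) :
    (⨆ (A : Set (Fin k → AddCircle (1 : ℝ)))
        (_ : MeasurableSet A ∧ (A + A) ∩ A = ∅), volume A) = 1 / 3 := by
  apply le_antisymm
  · apply iSup_le
    intro A
    apply iSup_le
    intro hA
    exact TorusSumFree.meas_le_third A hA.1 hA.2
  · obtain ⟨A, hmeas, hsf, hvol⟩ := TorusSumFree.lower_bound (k := k) hk
    calc (1:ℝ≥0∞)/3 = volume A := hvol.symm
      _ ≤ ⨆ (_ : MeasurableSet A ∧ (A + A) ∩ A = ∅), volume A := le_iSup_of_le ⟨hmeas, hsf⟩ le_rfl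
      _ ≤ _ := le_iSup_of_le A le_rfl
end
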